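/- arXiv:1506.08150 — 4 statements merged into one kernel-verified Lean document; each statement's English description precedes it below -/
import Mathlib

section
/- There is an absolute constant C such that for every convex tree 𝒯 of dyadic squares one has ∑_{k∈ℤ} 2^{2k} · #Δ(𝒯_k) ≤ C |R_𝒯|, where #Δ(𝒯_k) is the cardinality of Δ(𝒯_k) and |R_𝒯| is the Lebesgue measure of the root square. -/
open MeasureTheory Set

noncomputable section

/-- The dyadic square with scale parameter `a.1` and position `(a.2.1, a.2.2)`. -/
def dSq (a : ℤ × ℤ × ℤ) : Set (ℝ × ℝ) :=
  Icc ((2:ℝ)^a.1 * (a.2.1 : ℝ)) ((2:ℝ)^a.1 * ((a.2.1 : ℝ) + 1)) ×ˢ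
    Icc ((2:ℝ)^a.1 * (a.2.2 : ℝ)) ((2:ℝ)^a.1 * ((a.2.2 : ℝ) + 1))

/-- A convex tree of dyadic squares. -/
structure ConvexTree where
  squares : Finset (ℤ × ℤ × ℤ)
  root : ℤ × ℤ × ℤ
  root_mem : root ∈ squares
  subset_root : ∀ a ∈ squares, dSq a ⊆ dSq root
  convex : ∀ a b c : ℤ × ℤ × ℤ, a ∈ squares → c ∈ squares →
    dSq a ⊆ dSq b → dSq b ⊆ dSq c → b ∈ squares

/-- `𝒯_k`: parameters of squares of the tree of sidelength `2^k`. -/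
def treeLevel (T : ConvexTree) (k : ℤ) : Set (ℤ × ℤ × ℤ) :=
  {a | a ∈ T.squares ∧ a.1 = k}

/-- `T_k`: union of the squares of sidelength `2^k` in the tree. -/
def Tk (T : ConvexTree) (k : ℤ) : Set (ℝ × ℝ) :=
  ⋃ a ∈ treeLevel T k, dSq a

/-- The Whitney region `Ω_𝒞` in the upper half space. -/
def Omega (C : Set (ℤ × ℤ × ℤ)) : Set ((ℝ × ℝ) × ℝ) :=
  ⋃ a ∈ C, dSq a ×ˢ Icc ((2:ℝ)^a.1 / 2) ((2:ℝ)^a.1)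

/-- Euclidean norm on `ℝ²`. -/
def en (z : ℝ × ℝ) : ℝ := Real.sqrt (z.1^2 + z.2^2)

/-- `θ(x,y) = (1+|(x,y)|⁴)⁻¹`. -/
def theta (z : ℝ × ℝ) : ℝ := (1 + en z ^ 4)⁻¹

/-- `ϑ(x) = (1+|x|)⁻⁴`. -/
def vth (x : ℝ) : ℝ := ((1 + |x|)^4)⁻¹

/-- `F² * [θ]_t (p,q)`. -/
def convTheta (F : ℝ × ℝ → ℝ) (p q t : ℝ) : ℝ :=
  ∫ z : ℝ × ℝ, (F z)^2 * ((t^2)⁻¹ * theta ((p - z.1)/t, (q - z.2)/t))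

/-- `M(F, 𝒞)`. -/
def Msize (F : ℝ × ℝ → ℝ) (C : Set (ℤ × ℤ × ℤ)) : ℝ :=
  ⨆ w : Omega C, Real.sqrt (convTheta F w.1.1.1 w.1.1.2 w.1.2)

/-- `F * [φ₁⊗φ₂⊗φ₃⊗φ₄]_t (p,q,p,q)` where `F` is the entangled product of `F₁,F₂,F₃,F₄`. -/
def entConv (F1 F2 F3 F4 : ℝ × ℝ → ℝ) (φ1 φ2 φ3 φ4 : ℝ → ℝ) (t p q : ℝ) : ℝ :=
  ∫ x : ℝ, ∫ y : ℝ, ∫ x' : ℝ, ∫ y' : ℝ,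
    F1 (x, y) * F2 (x', y) * F3 (x', y') * F4 (x, y') *
      (t⁻¹ * φ1 ((p - x)/t)) * (t⁻¹ * φ2 ((q - y)/t)) *
      (t⁻¹ * φ3 ((p - x')/t)) * (t⁻¹ * φ4 ((q - y')/t))

/-- The local form `Θ^𝒞_{φ₁,φ₂,φ₃,φ₄}`. -/
def Theta (C : Set (ℤ × ℤ × ℤ)) (φ1 φ2 φ3 φ4 : ℝ → ℝ)
    (F1 F2 F3 F4 : ℝ × ℝ → ℝ) : ℝ :=
  ∫ w in Omega C, entConv F1 F2 F3 F4 φ1 φ2 φ3 φ4 w.2 w.1.1 w.1.2 / w.2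

/-- Bounded, positive, measurable with finite measure support. -/
def Nice (F : ℝ × ℝ → ℝ) : Prop :=
  Measurable F ∧ (∃ C : ℝ, ∀ z, |F z| ≤ C) ∧
    volume (Function.support F) < ⊤ ∧ ∀ z, 0 ≤ F z

/-- The lattice `2^kℤ × 2^kℤ`. -/
def latt (k : ℤ) : Set (ℝ × ℝ) :=
  {z | ∃ m n : ℤ, z.1 = (2:ℝ)^k * m ∧ z.2 = (2:ℝ)^k * n}

/-- `Δ(𝒯_k) = ∂T_k ∩ (2^kℤ × 2^kℤ)`. -/
def Delta (T : ConvexTree) (k : ℤ) : Set (ℝ × ℝ) := frontier (Tk T k) ∩ latt k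

lemma two_zpow_pos (k : ℤ) : (0:ℝ) < 2^k := zpow_pos two_pos k

lemma Icc_ne (k m : ℤ) : ((2:ℝ)^k * m) < ((2:ℝ)^k * (m+1)) := by
  have := two_zpow_pos k; nlinarith

/-- 1D: the interval at level `j` position `p` contains `2^k*m` iff integer bounds hold. -/
lemma icc_bounds {k j m p : ℤ} (hkj : k ≤ j)
    (h : (2:ℝ)^k * m ∈ Icc ((2:ℝ)^j * p) ((2:ℝ)^j * (p+1))) :
    (2:ℤ)^(j-k).toNat * p ≤ m ∧ m ≤ (2:ℤ)^(j-k).toNat * (p+1) := by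
  have hD : ((2:ℝ)^j) = (2:ℝ)^k * ((2:ℤ)^(j-k).toNat : ℤ) := by
    push_cast
    rw [← zpow_natCast (2:ℝ) (j-k).toNat, Int.toNat_of_nonneg (by omega), ← zpow_add₀ (two_ne_zero)]
    ring_nf
  obtain ⟨h1, h2⟩ := h
  rw [hD] at h1 h2
  have hp := two_zpow_pos k
  constructor
  · have : ((2:ℤ)^(j-k).toNat * p : ℤ) ≤ (m:ℝ) := by
      push_cast at h1 ⊢; nlinarith
    exact_mod_cast this
  · have : (m:ℝ) ≤ ((2:ℤ)^(j-k).toNat * (p+1) : ℤ) := by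
      push_cast at h2 ⊢; nlinarith
    exact_mod_cast this

lemma icc_incl {k j m p : ℤ} (hkj : k ≤ j)
    (h1 : (2:ℤ)^(j-k).toNat * p ≤ m) (h2 : m + 1 ≤ (2:ℤ)^(j-k).toNat * (p+1)) :
    Icc ((2:ℝ)^k * m) ((2:ℝ)^k * (m+1)) ⊆ Icc ((2:ℝ)^j * p) ((2:ℝ)^j * (p+1)) := by
  have hD : ((2:ℝ)^j) = (2:ℝ)^k * ((2:ℤ)^(j-k).toNat : ℤ) := by
    push_cast
    rw [← zpow_natCast (2:ℝ) (j-k).toNat, Int.toNat_of_nonneg (by omega), ← zpow_add₀ (two_ne_zero)]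
    ring_nf
  have hp := two_zpow_pos k
  apply Icc_subset_Icc
  · rw [hD]
    have : (((2:ℤ)^(j-k).toNat * p : ℤ):ℝ) ≤ (m:ℝ) := by exact_mod_cast h1
    push_cast at this ⊢; nlinarith
  · rw [hD]
    have : ((m:ℝ)+1) ≤ (((2:ℤ)^(j-k).toNat * (p+1) : ℤ):ℝ) := by exact_mod_cast h2
    push_cast at this ⊢; nlinarith

lemma dSq_mem_iff {a : ℤ × ℤ × ℤ} {z : ℝ × ℝ} :
    z ∈ dSq a ↔ z.1 ∈ Icc ((2:ℝ)^a.1 * (a.2.1:ℝ)) ((2:ℝ)^a.1 * ((a.2.1:ℝ)+1)) ∧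
      z.2 ∈ Icc ((2:ℝ)^a.1 * (a.2.2:ℝ)) ((2:ℝ)^a.1 * ((a.2.2:ℝ)+1)) := Iff.rfl

lemma dSq_level_le {a b : ℤ × ℤ × ℤ} (h : dSq a ⊆ dSq b) : a.1 ≤ b.1 := by
  have hne1 : ((2:ℝ)^a.1 * (a.2.1:ℝ)) ≤ ((2:ℝ)^a.1 * ((a.2.1:ℝ)+1)) := (Icc_ne _ _).le
  have hne2 : ((2:ℝ)^a.1 * (a.2.2:ℝ)) ≤ ((2:ℝ)^a.1 * ((a.2.2:ℝ)+1)) := (Icc_ne _ _).le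
  rw [dSq, dSq, prod_subset_prod_iff] at h
  rcases h with ⟨h1, _⟩ | h | h
  · rw [Icc_subset_Icc_iff hne1] at h1
    have : (2:ℝ)^a.1 ≤ (2:ℝ)^b.1 := by
      have e1 : (2:ℝ)^a.1 * ((a.2.1:ℝ)+1) - (2:ℝ)^a.1 * (a.2.1:ℝ) = 2^a.1 := by ring
      have e2 : (2:ℝ)^b.1 * ((b.2.1:ℝ)+1) - (2:ℝ)^b.1 * (b.2.1:ℝ) = 2^b.1 := by ring
      nlinarith [h1.1, h1.2]
    exact_mod_cast (zpow_le_zpow_iff_right₀ (by norm_num : (1:ℝ) < 2)).1 this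
  · exact absurd h (Nonempty.ne_empty (nonempty_Icc.2 hne1))
  · exact absurd h (Nonempty.ne_empty (nonempty_Icc.2 hne2))

lemma dSq_subset_bounds {a b : ℤ × ℤ × ℤ} (h : dSq a ⊆ dSq b) :
    a.1 ≤ b.1 ∧ ((2:ℤ)^(b.1-a.1).toNat * b.2.1 ≤ a.2.1 ∧ a.2.1 + 1 ≤ (2:ℤ)^(b.1-a.1).toNat * (b.2.1+1))
      ∧ ((2:ℤ)^(b.1-a.1).toNat * b.2.2 ≤ a.2.2 ∧ a.2.2 + 1 ≤ (2:ℤ)^(b.1-a.1).toNat * (b.2.2+1)) := by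
  have hle := dSq_level_le h
  refine ⟨hle, ?_, ?_⟩
  · have h1 := h (show ((2:ℝ)^a.1 * (a.2.1:ℝ), (2:ℝ)^a.1 * (a.2.2:ℝ)) ∈ dSq a by
      constructor <;> exact ⟨le_refl _, (Icc_ne _ _).le⟩)
    have h2 := h (show ((2:ℝ)^a.1 * ((a.2.1:ℝ)+1), (2:ℝ)^a.1 * (a.2.2:ℝ)) ∈ dSq a by
      constructor <;> simp [Icc_ne, (Icc_ne _ _).le])
    have c1 := (icc_bounds hle h1.1).1
    have c2' := icc_bounds (m := a.2.1 + 1) hle (by exact_mod_cast h2.1)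
    exact ⟨c1, c2'.2⟩
  · have h1 := h (show ((2:ℝ)^a.1 * (a.2.1:ℝ), (2:ℝ)^a.1 * (a.2.2:ℝ)) ∈ dSq a by
      constructor <;> exact ⟨le_refl _, (Icc_ne _ _).le⟩)
    have h2 := h (show ((2:ℝ)^a.1 * (a.2.1:ℝ), (2:ℝ)^a.1 * ((a.2.2:ℝ)+1)) ∈ dSq a by
      constructor <;> simp [Icc_ne, (Icc_ne _ _).le])
    have c1 := (icc_bounds hle h1.2).1
    have c2' := icc_bounds (m := a.2.2 + 1) hle (by exact_mod_cast h2.2)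
    exact ⟨c1, c2'.2⟩

lemma dSq_subset_of_bounds {a b : ℤ × ℤ × ℤ} (hle : a.1 ≤ b.1)
    (h1 : (2:ℤ)^(b.1-a.1).toNat * b.2.1 ≤ a.2.1) (h2 : a.2.1 + 1 ≤ (2:ℤ)^(b.1-a.1).toNat * (b.2.1+1))
    (h3 : (2:ℤ)^(b.1-a.1).toNat * b.2.2 ≤ a.2.2) (h4 : a.2.2 + 1 ≤ (2:ℤ)^(b.1-a.1).toNat * (b.2.2+1)) :
    dSq a ⊆ dSq b := by
  apply Set.prod_mono
  · have := icc_incl hle h1 h2; push_cast at this ⊢; exact this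
  · have := icc_incl hle h3 h4; push_cast at this ⊢; exact this


/-- parent square -/
def par (a : ℤ × ℤ × ℤ) : ℤ × ℤ × ℤ := (a.1 + 1, a.2.1 / 2, a.2.2 / 2)

lemma subset_par (a : ℤ × ℤ × ℤ) : dSq a ⊆ dSq (par a) := by
  apply dSq_subset_of_bounds
  · show a.1 ≤ a.1 + 1; omega
  all_goals (show _ ≤ _)
  all_goals (simp only [par]; rw [show ((a.1+1) - a.1).toNat = 1 by omega]; omega)

lemma level_le (T : ConvexTree) {a : ℤ × ℤ × ℤ} (ha : a ∈ T.squares) : a.1 ≤ T.root.1 :=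
  dSq_level_le (T.subset_root a ha)

lemma par_subset_root (T : ConvexTree) {a : ℤ × ℤ × ℤ} (ha : a ∈ T.squares)
    (hlt : a.1 < T.root.1) : dSq (par a) ⊆ dSq T.root := by
  obtain ⟨hle, ⟨h1, h2⟩, h3, h4⟩ := dSq_subset_bounds (T.subset_root a ha)
  set d := (T.root.1 - a.1).toNat with hd
  have hd1 : 1 ≤ d := by omega
  have hE : (2:ℤ)^d = 2 * 2^(d-1) := by
    rw [← pow_succ']; congr 1; omega
  have hd' : (T.root.1 - (a.1 + 1)).toNat = d - 1 := by omega
  rw [hE] at h1 h2 h3 h4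
  have h1' : 2 * ((2:ℤ)^(d-1) * T.root.2.1) ≤ a.2.1 := by rw [← mul_assoc]; exact h1
  have h2' : a.2.1 + 1 ≤ 2 * ((2:ℤ)^(d-1) * (T.root.2.1+1)) := by rw [← mul_assoc]; exact h2
  have h3' : 2 * ((2:ℤ)^(d-1) * T.root.2.2) ≤ a.2.2 := by rw [← mul_assoc]; exact h3
  have h4' : a.2.2 + 1 ≤ 2 * ((2:ℤ)^(d-1) * (T.root.2.2+1)) := by rw [← mul_assoc]; exact h4
  apply dSq_subset_of_bounds
  · show a.1 + 1 ≤ T.root.1; omega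
  all_goals (show _ ≤ _); all_goals (simp only [par, hd'])
  · generalize (2:ℤ)^(d-1) * T.root.2.1 = N at h1' ⊢; omega
  · generalize (2:ℤ)^(d-1) * (T.root.2.1+1) = N at h2' ⊢; omega
  · generalize (2:ℤ)^(d-1) * T.root.2.2 = N at h3' ⊢; omega
  · generalize (2:ℤ)^(d-1) * (T.root.2.2+1) = N at h4' ⊢; omega

lemma par_mem (T : ConvexTree) {a : ℤ × ℤ × ℤ} (ha : a ∈ T.squares) (hlt : a.1 < T.root.1) :
    par a ∈ T.squares :=
  T.convex a (par a) T.root ha T.root_mem (subset_par a) (par_subset_root T ha hlt)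

lemma eq_root_of_level (T : ConvexTree) {a : ℤ × ℤ × ℤ} (ha : a ∈ T.squares)
    (h : a.1 = T.root.1) : a = T.root := by
  obtain ⟨hle, ⟨h1, h2⟩, h3, h4⟩ := dSq_subset_bounds (T.subset_root a ha)
  rw [show (T.root.1 - a.1).toNat = 0 by omega] at h1 h2 h3 h4
  have : a.2.1 = T.root.2.1 := by omega
  have : a.2.2 = T.root.2.2 := by omega
  exact Prod.ext h (Prod.ext ‹a.2.1 = T.root.2.1› ‹a.2.2 = T.root.2.2›)

lemma Tk_eq (T : ConvexTree) (k : ℤ) :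
    Tk T k = ⋃ a ∈ T.squares.filter (fun a => a.1 = k), dSq a := by
  simp only [Tk, treeLevel]; ext z; simp [Finset.mem_filter]

lemma isClosed_dSq (a : ℤ × ℤ × ℤ) : IsClosed (dSq a) := (isClosed_Icc).prod isClosed_Icc

lemma isClosed_Tk (T : ConvexTree) (k : ℤ) : IsClosed (Tk T k) := by
  rw [Tk_eq]
  exact Set.Finite.isClosed_biUnion (Finset.finite_toSet _) (fun a _ => isClosed_dSq a)

lemma Tk_subset_root (T : ConvexTree) (k : ℤ) : Tk T k ⊆ dSq T.root := by
  rw [Tk_eq]; exact Set.iUnion₂_subset fun a ha => T.subset_root a (Finset.mem_filter.1 ha).1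

lemma mem_Tk {T : ConvexTree} {k : ℤ} {a : ℤ × ℤ × ℤ} (ha : a ∈ T.squares) (hl : a.1 = k) :
    dSq a ⊆ Tk T k := Set.subset_biUnion_of_mem (u := fun a => dSq a) (show a ∈ treeLevel T k from ⟨ha, hl⟩)

lemma Tk_mono_succ (T : ConvexTree) {k : ℤ} (hk : k < T.root.1) : Tk T k ⊆ Tk T (k+1) := by
  intro z hz
  simp only [Tk, mem_iUnion] at hz
  obtain ⟨a, ⟨ha, hl⟩, hza⟩ := hz
  exact mem_Tk (par_mem T ha (by omega)) (by simp [par, hl]) (subset_par a hza)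

lemma Tk_mono (T : ConvexTree) {i j : ℤ} (hij : i ≤ j) (hj : j ≤ T.root.1) :
    Tk T i ⊆ Tk T j := by
  have H : ∀ j, i ≤ j → (j ≤ T.root.1 → Tk T i ⊆ Tk T j) := by
    refine Int.le_induction (fun _ => subset_rfl) ?_
    intro j hij ih hj
    exact subset_trans (ih (by omega)) (Tk_mono_succ T (by omega))
  exact H j hij hj

lemma Tk_root (T : ConvexTree) : Tk T T.root.1 = dSq T.root := by
  apply Set.Subset.antisymm (Tk_subset_root T _)
  exact mem_Tk T.root_mem rfl


/-- 1D disjointness of distinct same-scale dyadic intervals (open vs closed). -/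
lemma ioo_icc_disj {k p p' : ℤ} (h : p ≠ p') :
    Ioo ((2:ℝ)^k * p) ((2:ℝ)^k * (p+1)) ∩ Icc ((2:ℝ)^k * p') ((2:ℝ)^k * (p'+1)) = ∅ := by
  have hp := two_zpow_pos k
  ext x
  simp only [mem_inter_iff, mem_Ioo, mem_Icc, mem_empty_iff_false, iff_false, not_and, and_imp]
  intro h1 h2 h3
  rcases lt_or_gt_of_ne h with hlt | hlt
  · -- p < p', so p + 1 ≤ p'
    have : ((p:ℝ)+1) ≤ (p':ℝ) := by exact_mod_cast (by omega : p + 1 ≤ p')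
    nlinarith
  · have : ((p':ℝ)+1) ≤ (p:ℝ) := by exact_mod_cast (by omega : p' + 1 ≤ p)
    nlinarith

lemma interior_dSq (a : ℤ × ℤ × ℤ) : interior (dSq a) =
    Ioo ((2:ℝ)^a.1 * (a.2.1 : ℝ)) ((2:ℝ)^a.1 * ((a.2.1 : ℝ) + 1)) ×ˢ
      Ioo ((2:ℝ)^a.1 * (a.2.2 : ℝ)) ((2:ℝ)^a.1 * ((a.2.2 : ℝ) + 1)) := by
  rw [dSq, interior_prod_eq, interior_Icc, interior_Icc]

/-- distinct squares at the same level: interior of one misses the other. -/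
lemma disj_level {a b : ℤ × ℤ × ℤ} (hl : a.1 = b.1) (hne : a ≠ b) :
    interior (dSq a) ∩ dSq b = ∅ := by
  rw [interior_dSq]
  have hor : a.2.1 ≠ b.2.1 ∨ a.2.2 ≠ b.2.2 := by
    by_contra hc; push_neg at hc
    exact hne (Prod.ext hl (Prod.ext hc.1 hc.2))
  ext z
  simp only [mem_inter_iff, mem_prod, mem_empty_iff_false, iff_false, not_and, and_imp]
  intro h1 h2 h3
  obtain ⟨h3, h4⟩ := h3
  exfalso
  rcases hor with hne1 | hne1
  · have hd := ioo_icc_disj (k := a.1) hne1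
    rw [← hl] at h3
    have : z.1 ∈ (∅ : Set ℝ) := hd ▸ mem_inter h1 h3
    exact this
  · have hd := ioo_icc_disj (k := a.1) (p := a.2.2) (p' := b.2.2) hne1
    rw [← hl] at h4
    have : z.2 ∈ (∅ : Set ℝ) := hd ▸ mem_inter h2 h4
    exact this

/-- interior of a non-tree square misses `T_j`. -/
lemma int_disj_Tk (T : ConvexTree) {Q : ℤ × ℤ × ℤ} (hQ : Q ∉ T.squares) :
    interior (dSq Q) ∩ Tk T Q.1 = ∅ := by
  rw [Tk, Set.inter_iUnion₂]
  simp only [Set.iUnion_eq_empty]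
  intro a ha
  obtain ⟨ha, hl⟩ := ha
  exact disj_level hl.symm (by rintro rfl; exact hQ ha)

/-- 1D: around any `x` there is a `δ` such that every nearby point shares a scale-`2^k`
dyadic interval with `x`. -/
lemma oneD (k : ℤ) (x : ℝ) : ∃ δ > 0, ∀ x', |x' - x| < δ →
    ∃ p : ℤ, x' ∈ Icc ((2:ℝ)^k * p) ((2:ℝ)^k * (p+1)) ∧
      x ∈ Icc ((2:ℝ)^k * p) ((2:ℝ)^k * (p+1)) := by
  have hs := two_zpow_pos k
  set s := (2:ℝ)^k
  set p0 := ⌊x / s⌋ with hp0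
  have hfl : s * p0 ≤ x ∧ x < s * (p0 + 1) := by
    constructor
    · rw [mul_comm]; exact (le_div_iff₀ hs).1 (Int.floor_le _)
    · rw [mul_comm]
      have := Int.lt_floor_add_one (x / s)
      calc x = (x / s) * s := by field_simp
        _ < (p0 + 1) * s := by push_cast; exact mul_lt_mul_of_pos_right (by exact_mod_cast this) hs
  by_cases hx : x = s * p0
  · refine ⟨s, hs, fun x' hx' => ?_⟩
    rcases le_or_gt x x' with hle | hlt
    · exact ⟨p0, ⟨by linarith [abs_lt.1 hx'], by rw [abs_lt] at hx'; push_cast; nlinarith⟩,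
        ⟨hx.ge, by push_cast; nlinarith⟩⟩
    · refine ⟨p0 - 1, ⟨?_, ?_⟩, ⟨?_, ?_⟩⟩ <;> (rw [abs_lt] at hx'; push_cast) <;> nlinarith
  · have h1 : s * p0 < x := lt_of_le_of_ne hfl.1 (by intro h; exact hx h.symm)
    refine ⟨min (x - s * p0) (s * (p0+1) - x), lt_min (by linarith) (by linarith [hfl.2]), fun x' hx' => ?_⟩
    obtain ⟨ha, hb⟩ := abs_lt.1 hx'
    have m1 := min_le_left (x - s * ↑p0) (s * (↑p0+1) - x)
    have m2 := min_le_right (x - s * ↑p0) (s * (↑p0+1) - x)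
    refine ⟨p0, ⟨by linarith, by push_cast; linarith⟩, hfl.1, by push_cast; linarith [hfl.2]⟩

/-- If every level-`j` square containing `z` is a tree square, then `z` is interior to `T_j`. -/
lemma mem_interior_of_all_tree (T : ConvexTree) (j : ℤ) (z : ℝ × ℝ)
    (h : ∀ p q : ℤ, z ∈ dSq (j, p, q) → (j, p, q) ∈ T.squares) :
    z ∈ interior (Tk T j) := by
  obtain ⟨δ1, hδ1, H1⟩ := oneD j z.1
  obtain ⟨δ2, hδ2, H2⟩ := oneD j z.2
  rw [mem_interior_iff_mem_nhds]
  refine Filter.mem_of_superset (Metric.ball_mem_nhds z (lt_min hδ1 hδ2)) ?_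
  intro w hw
  rw [Metric.mem_ball, Prod.dist_eq, Real.dist_eq, Real.dist_eq, max_lt_iff, lt_min_iff, lt_min_iff] at hw
  obtain ⟨p, hp1, hp2⟩ := H1 w.1 hw.1.1
  obtain ⟨q, hq1, hq2⟩ := H2 w.2 hw.2.2
  have hz : z ∈ dSq (j, p, q) := ⟨hp2, hq2⟩
  have hmem := h p q hz
  exact Set.mem_biUnion (show (j,p,q) ∈ treeLevel T j from ⟨hmem, rfl⟩) (show w ∈ dSq (j,p,q) from ⟨hp1, hq1⟩)

/-- S3: if `z` is in a square `Q` and interior to `T_{Q.1+1}`, then `par Q` is a tree square. -/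
lemma par_mem_of_interior (T : ConvexTree) {Q : ℤ × ℤ × ℤ} {z : ℝ × ℝ}
    (hz1 : z ∈ dSq Q) (hz2 : z ∈ interior (Tk T (Q.1 + 1))) : par Q ∈ T.squares := by
  obtain ⟨ε, hε, hball⟩ := Metric.mem_nhds_iff.1 (mem_interior_iff_mem_nhds.1 hz2)
  have hcl : z ∈ closure (interior (dSq (par Q))) := by
    rw [interior_dSq, closure_prod_eq, closure_Ioo (Icc_ne _ _).ne, closure_Ioo (Icc_ne _ _).ne]
    exact subset_par Q hz1
  obtain ⟨w, hw1, hw2⟩ := Metric.mem_closure_iff.1 hcl ε hε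
  have hwT : w ∈ Tk T (Q.1 + 1) := hball (Metric.mem_ball.2 (by rw [dist_comm]; exact hw2))
  rw [Tk] at hwT
  simp only [mem_iUnion] at hwT
  obtain ⟨a, ⟨ha, hl⟩, hwa⟩ := hwT
  by_cases hpq : a = par Q
  · rwa [← hpq]
  · exfalso
    have hd := disj_level (a := par Q) (b := a) (by simp [par, hl]) (fun hc => hpq hc.symm)
    have : w ∈ (∅ : Set (ℝ × ℝ)) := hd ▸ mem_inter hw1 hwa
    exact this


/-- the candidate finset of lattice positions on the frontier of a level-`j` square. -/
def edgeSet (e : ℕ) (p q : ℤ) : Finset (ℤ × ℤ) :=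
  (({(2:ℤ)^e * p, (2:ℤ)^e * (p+1)} : Finset ℤ) ×ˢ Finset.Icc ((2:ℤ)^e * q) ((2:ℤ)^e * (q+1))) ∪
    (Finset.Icc ((2:ℤ)^e * p) ((2:ℤ)^e * (p+1)) ×ˢ ({(2:ℤ)^e * q, (2:ℤ)^e * (q+1)} : Finset ℤ))

lemma edgeSet_card (e : ℕ) (p q : ℤ) : (edgeSet e p q).card ≤ 8 * 2^e := by
  have h1 : (Finset.Icc ((2:ℤ)^e * q) ((2:ℤ)^e * (q+1))).card = (2^e + 1 : ℤ).toNat := by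
    rw [Int.card_Icc]; congr 1; ring_nf
  have h2 : (Finset.Icc ((2:ℤ)^e * p) ((2:ℤ)^e * (p+1))).card = (2^e + 1 : ℤ).toNat := by
    rw [Int.card_Icc]; congr 1; ring_nf
  have hpair1 : (({(2:ℤ)^e * p, (2:ℤ)^e * (p+1)} : Finset ℤ)).card ≤ 2 :=
    (Finset.card_insert_le _ _).trans (by simp)
  have hpair2 : (({(2:ℤ)^e * q, (2:ℤ)^e * (q+1)} : Finset ℤ)).card ≤ 2 :=
    (Finset.card_insert_le _ _).trans (by simp)
  have htn : ((2:ℤ)^e + 1).toNat = 2^e + 1 := by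
    have : ((2:ℤ)^e + 1) = ((2^e + 1 : ℕ) : ℤ) := by push_cast; ring
    rw [this, Int.toNat_natCast]
  calc (edgeSet e p q).card ≤ _ + _ := Finset.card_union_le _ _
    _ ≤ 2 * (2^e + 1) + (2^e + 1) * 2 := by
        gcongr
        · rw [Finset.card_product, h1, htn]
          exact Nat.mul_le_mul_right _ hpair1
        · rw [Finset.card_product, h2, htn]
          exact Nat.mul_le_mul_left _ hpair2
    _ ≤ 8 * 2^e := by
        have h1e : 1 ≤ 2^e := Nat.one_le_two_pow
        omega

/-- frontier ∩ lattice is covered by the edge set. -/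
lemma frontier_latt_subset {k : ℤ} (a : ℤ × ℤ × ℤ) (h : k ≤ a.1) :
    frontier (dSq a) ∩ latt k ⊆
      (fun mn : ℤ × ℤ => (((2:ℝ)^k * mn.1, (2:ℝ)^k * mn.2) : ℝ × ℝ)) '' ↑(edgeSet (a.1-k).toNat a.2.1 a.2.2) := by
  rintro z ⟨hzf, m, n, hm, hn⟩
  set e := (a.1-k).toNat with he
  have hD : ((2:ℝ)^a.1) = (2:ℝ)^k * (((2:ℤ)^e : ℤ) : ℝ) := by
    push_cast
    rw [← zpow_natCast (2:ℝ) e, he, Int.toNat_of_nonneg (by omega), ← zpow_add₀ (two_ne_zero)]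
    ring_nf
  have hzin : z ∈ dSq a := (isClosed_dSq a).frontier_subset hzf
  have hzout : z ∉ interior (dSq a) := hzf.2
  obtain ⟨hz1, hz2⟩ := hzin
  rw [interior_dSq] at hzout
  rw [hm] at hz1
  rw [hn] at hz2
  obtain ⟨hb1, hb2⟩ := icc_bounds h hz1
  obtain ⟨hb3, hb4⟩ := icc_bounds h hz2
  have hcancel : ∀ m' p' : ℤ, (2:ℝ)^k * m' = (2:ℝ)^a.1 * p' → m' = (2:ℤ)^e * p' := by
    intro m' p' hmp
    rw [hD] at hmp
    have h2 : (m' : ℝ) = (((2:ℤ)^e * p' : ℤ) : ℝ) := by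
      push_cast at hmp ⊢
      have := two_zpow_pos k
      nlinarith [hmp]
    exact_mod_cast h2
  have hedge : m = (2:ℤ)^e * a.2.1 ∨ m = (2:ℤ)^e * (a.2.1+1) ∨ n = (2:ℤ)^e * a.2.2 ∨ n = (2:ℤ)^e * (a.2.2+1) := by
    have : ¬ (z.1 ∈ Ioo ((2:ℝ)^a.1 * (a.2.1:ℝ)) ((2:ℝ)^a.1 * ((a.2.1:ℝ)+1)) ∧
        z.2 ∈ Ioo ((2:ℝ)^a.1 * (a.2.2:ℝ)) ((2:ℝ)^a.1 * ((a.2.2:ℝ)+1))) := hzout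
    rw [not_and_or] at this
    rcases this with hno | hno
    · rw [hm, mem_Ioo, not_and_or, not_lt, not_lt] at hno
      rcases hno with hle | hle
      · exact Or.inl (hcancel m a.2.1 (le_antisymm hle (by linarith [hz1.1])))
      · refine Or.inr (Or.inl (hcancel m (a.2.1+1) ?_))
        push_cast
        push_cast at hle
        linarith [hz1.2]
    · rw [hn, mem_Ioo, not_and_or, not_lt, not_lt] at hno
      rcases hno with hle | hle
      · exact Or.inr (Or.inr (Or.inl (hcancel n a.2.2 (le_antisymm hle (by linarith [hz2.1])))))
      · refine Or.inr (Or.inr (Or.inr (hcancel n (a.2.2+1) ?_)))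
        push_cast
        push_cast at hle
        linarith [hz2.2]
  refine ⟨(m, n), ?_, ?_⟩
  · simp only [edgeSet, Finset.coe_union, Finset.mem_coe, Finset.mem_union, Finset.mem_product,
      Finset.mem_insert, Finset.mem_singleton, Finset.mem_Icc, Set.mem_union]
    rcases hedge with hh | hh | hh | hh
    · exact Or.inl ⟨Or.inl hh, hb3, hb4⟩
    · exact Or.inl ⟨Or.inr hh, hb3, hb4⟩
    · exact Or.inr ⟨⟨hb1, hb2⟩, Or.inl hh⟩
    · exact Or.inr ⟨⟨hb1, hb2⟩, Or.inr hh⟩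
  · simp only
    exact Prod.ext hm.symm hn.symm

lemma frontier_latt_finite {k : ℤ} (a : ℤ × ℤ × ℤ) (h : k ≤ a.1) :
    (frontier (dSq a) ∩ latt k).Finite :=
  Set.Finite.subset (Set.Finite.image _ (Finset.finite_toSet _)) (frontier_latt_subset a h)

lemma frontier_latt_card {k : ℤ} (a : ℤ × ℤ × ℤ) (h : k ≤ a.1) :
    ((frontier (dSq a) ∩ latt k).ncard : ℝ) ≤ 8 * 2^(a.1 - k) := by
  have h1 : (frontier (dSq a) ∩ latt k).ncard ≤ 8 * 2^((a.1-k).toNat) := by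
    calc (frontier (dSq a) ∩ latt k).ncard
        ≤ ((fun mn : ℤ × ℤ => (((2:ℝ)^k * mn.1, (2:ℝ)^k * mn.2) : ℝ × ℝ)) ''
            ↑(edgeSet (a.1-k).toNat a.2.1 a.2.2)).ncard :=
          Set.ncard_le_ncard (frontier_latt_subset a h) (Set.Finite.image _ (Finset.finite_toSet _))
      _ ≤ (↑(edgeSet (a.1-k).toNat a.2.1 a.2.2) : Set (ℤ × ℤ)).ncard := Set.ncard_image_le (Finset.finite_toSet _)
      _ = (edgeSet (a.1-k).toNat a.2.1 a.2.2).card := Set.ncard_coe_finset _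
      _ ≤ 8 * 2^((a.1-k).toNat) := edgeSet_card _ _ _
  calc ((frontier (dSq a) ∩ latt k).ncard : ℝ) ≤ ((8 * 2^((a.1-k).toNat) : ℕ) : ℝ) := by exact_mod_cast h1
    _ = 8 * 2^(a.1 - k) := by
        push_cast
        rw [← zpow_natCast (2:ℝ) (a.1-k).toNat, Int.toNat_of_nonneg (by omega)]

lemma ncard_biUnion_le {ι α : Type*} (t : Finset ι) (A : ι → Set α) (hA : ∀ i ∈ t, (A i).Finite) :
    (⋃ i ∈ t, A i).ncard ≤ ∑ i ∈ t, (A i).ncard := by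
  classical
  induction t using Finset.induction_on with
  | empty => simp
  | insert i s hnotmem ih =>
    rw [Finset.sum_insert hnotmem]
    have hfin : (⋃ j ∈ s, A j).Finite :=
      Set.Finite.biUnion (Finset.finite_toSet s) (fun j hj => hA j (Finset.mem_insert_of_mem hj))
    calc (⋃ j ∈ insert i s, A j).ncard = (A i ∪ ⋃ j ∈ s, A j).ncard := by
          rw [Finset.set_biUnion_insert]
      _ ≤ (A i).ncard + (⋃ j ∈ s, A j).ncard := Set.ncard_union_le _ _
      _ ≤ (A i).ncard + ∑ j ∈ s, (A j).ncard := by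
          exact Nat.add_le_add_left (ih (fun j hj => hA j (Finset.mem_insert_of_mem hj))) _

/-- geometric sum bound: any finset of integers `≤ K`. -/
lemma geo_sum (s : Finset ℤ) (K : ℤ) (h : ∀ k ∈ s, k ≤ K) :
    ∑ k ∈ s, (2:ℝ)^k ≤ 2^(K+1) := by
  classical
  have hinj : Set.InjOn (fun k => (K - k).toNat) ↑s := by
    intro x hx y hy hxy
    have hx' := h x hx; have hy' := h y hy
    simp only at hxy; omega
  have himg : ∑ k ∈ s, (2:ℝ)^k = ∑ j ∈ s.image (fun k => (K - k).toNat), (2:ℝ)^K * (1/2)^j := by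
    rw [Finset.sum_image (fun x hx y hy hxy => hinj hx hy hxy)]
    apply Finset.sum_congr rfl
    intro k hk
    have hkK := h k hk
    rw [div_pow, one_pow, ← zpow_natCast (2:ℝ) ((K - k).toNat), Int.toNat_of_nonneg (by omega)]
    rw [mul_one_div, eq_div_iff (ne_of_gt (two_zpow_pos _)), ← zpow_add₀ (two_ne_zero : (2:ℝ) ≠ 0)]
    congr 1; omega
  rw [himg]
  have hsum : ∑ j ∈ s.image (fun k => (K - k).toNat), ((1:ℝ)/2)^j ≤ 2 := by
    have := Summable.sum_le_tsum (s.image (fun k => (K - k).toNat))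
      (fun i _ => by positivity)
      (summable_geometric_of_lt_one (by norm_num) (by norm_num : (1:ℝ)/2 < 1))
    rw [tsum_geometric_of_lt_one (by norm_num) (by norm_num)] at this
    norm_num at this ⊢
    linarith
  calc ∑ j ∈ s.image (fun k => (K - k).toNat), (2:ℝ)^K * (1/2)^j
      = (2:ℝ)^K * ∑ j ∈ s.image (fun k => (K - k).toNat), (1/2)^j := by rw [Finset.mul_sum]
    _ ≤ (2:ℝ)^K * 2 := by
        have := two_zpow_pos K
        nlinarith [hsum]
    _ = 2^(K+1) := by rw [zpow_add₀ (two_ne_zero : (2:ℝ) ≠ 0)]; ring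


def badF (T : ConvexTree) : Finset (ℤ × ℤ × ℤ) :=
  ((T.squares ×ˢ (({0,1} : Finset ℤ) ×ˢ ({0,1} : Finset ℤ))).image
    (fun x => (x.1.1 - 1, 2*x.1.2.1 + x.2.1, 2*x.1.2.2 + x.2.2))).filter (· ∉ T.squares)

lemma mem_badF {T : ConvexTree} {b : ℤ × ℤ × ℤ} :
    b ∈ badF T ↔ b ∉ T.squares ∧ par b ∈ T.squares := by
  classical
  constructor
  · intro hb
    rw [badF, Finset.mem_filter] at hb
    obtain ⟨hb1, hb2⟩ := hb
    refine ⟨hb2, ?_⟩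
    rw [Finset.mem_image] at hb1
    obtain ⟨x, hx, hxe⟩ := hb1
    rw [Finset.mem_product, Finset.mem_product] at hx
    obtain ⟨hxs, hx1, hx2⟩ := hx
    simp only [Finset.mem_insert, Finset.mem_singleton] at hx1 hx2
    have : par b = x.1 := by
      rw [← hxe]
      simp only [par]
      refine Prod.ext (by omega) (Prod.ext ?_ ?_) <;> simp <;> omega
    rwa [this]
  · rintro ⟨hb1, hb2⟩
    rw [badF, Finset.mem_filter]
    refine ⟨?_, hb1⟩
    rw [Finset.mem_image]
    refine ⟨(par b, (b.2.1 % 2, b.2.2 % 2)), ?_, ?_⟩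
    · rw [Finset.mem_product, Finset.mem_product]
      refine ⟨hb2, ?_, ?_⟩ <;> simp only [Finset.mem_insert, Finset.mem_singleton] <;> omega
    · simp only [par]
      refine Prod.ext (by simp) (Prod.ext ?_ ?_) <;> simp <;> omega

lemma badF_level {T : ConvexTree} {b : ℤ × ℤ × ℤ} (hb : b ∈ badF T) : b.1 + 1 ≤ T.root.1 := by
  have := level_le T (mem_badF.1 hb).2
  simpa [par] using this

lemma int_bad_subset {T : ConvexTree} {b : ℤ × ℤ × ℤ} (hb : b ∈ badF T) :
    interior (dSq b) ⊆ Tk T (b.1 + 1) :=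
  (interior_subset.trans (subset_par b)).trans (mem_Tk (mem_badF.1 hb).2 (by simp [par]))

lemma bad_pairwise (T : ConvexTree) :
    (↑(badF T) : Set (ℤ × ℤ × ℤ)).PairwiseDisjoint (fun b => interior (dSq b)) := by
  have key : ∀ b ∈ badF T, ∀ c ∈ badF T, b ≠ c → b.1 ≤ c.1 →
      Disjoint (interior (dSq b)) (interior (dSq c)) := by
    intro b hb c hc hne hlev
    rcases eq_or_lt_of_le hlev with heq | hlt
    · rw [Set.disjoint_left]
      intro z hzb hzc
      have := disj_level heq hne
      exact absurd (mem_inter hzb (interior_subset hzc)) (by simp [this])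
    · rw [Set.disjoint_left]
      intro z hzb hzc
      have h1 : z ∈ Tk T c.1 :=
        Tk_mono T (by omega) (by have := badF_level hc; omega) (int_bad_subset hb hzb)
      have h2 := int_disj_Tk T (mem_badF.1 hc).1
      exact absurd (mem_inter hzc h1) (by simp [h2])
  intro b hb c hc hne
  simp only [Function.onFun]
  rcases le_total b.1 c.1 with hle | hle
  · exact key b hb c hc hne hle
  · exact (key c hc b hb hne.symm hle).symm

lemma volume_dSq (a : ℤ × ℤ × ℤ) : volume (dSq a) = ENNReal.ofReal ((2:ℝ)^a.1) * ENNReal.ofReal ((2:ℝ)^a.1) := by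
  rw [dSq, Measure.volume_eq_prod, Measure.prod_prod, Real.volume_Icc, Real.volume_Icc]
  congr 1 <;> congr 1 <;> ring

lemma volume_int_dSq (a : ℤ × ℤ × ℤ) :
    volume (interior (dSq a)) = ENNReal.ofReal ((2:ℝ)^a.1) * ENNReal.ofReal ((2:ℝ)^a.1) := by
  rw [interior_dSq, Measure.volume_eq_prod, Measure.prod_prod, Real.volume_Ioo, Real.volume_Ioo]
  congr 1 <;> congr 1 <;> ring

lemma volume_dSq_toReal (a : ℤ × ℤ × ℤ) : (volume (dSq a)).toReal = (2:ℝ)^(2*a.1) := by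
  rw [volume_dSq, ENNReal.toReal_mul, ENNReal.toReal_ofReal (two_zpow_pos a.1).le,
    ← zpow_add₀ (two_ne_zero : (2:ℝ) ≠ 0)]
  congr 1; ring

lemma volume_dSq_ne_top (a : ℤ × ℤ × ℤ) : volume (dSq a) ≠ ⊤ := by
  rw [volume_dSq]; exact ENNReal.mul_ne_top ENNReal.ofReal_ne_top ENNReal.ofReal_ne_top

/-- the key measure estimate: total area of bad squares is at most the root's. -/
lemma bad_measure (T : ConvexTree) :
    ∑ b ∈ badF T, (2:ℝ)^(2*b.1) ≤ (volume (dSq T.root)).toReal := by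
  have hmeas : ∀ b ∈ badF T, MeasurableSet (interior (dSq b)) := fun b _ => isOpen_interior.measurableSet
  have hsum : ∑ b ∈ badF T, volume (interior (dSq b)) ≤ volume (dSq T.root) := by
    rw [← measure_biUnion_finset (bad_pairwise T) hmeas]
    apply measure_mono
    apply Set.iUnion₂_subset
    intro b hb
    have h1 : interior (dSq b) ⊆ Tk T (b.1+1) := int_bad_subset hb
    have h2 : Tk T (b.1+1) ⊆ Tk T T.root.1 := Tk_mono T (badF_level hb) le_rfl
    rw [Tk_root] at h2
    exact h1.trans h2
  have heq : ∀ b ∈ badF T, (2:ℝ)^(2*b.1) = (volume (interior (dSq b))).toReal := by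
    intro b _
    rw [volume_int_dSq, ENNReal.toReal_mul, ENNReal.toReal_ofReal (two_zpow_pos b.1).le,
      ← zpow_add₀ (two_ne_zero : (2:ℝ) ≠ 0)]
    congr 1; ring
  rw [Finset.sum_congr rfl heq]
  rw [← ENNReal.toReal_sum (fun b _ => by
    rw [volume_int_dSq]; exact ENNReal.mul_ne_top ENNReal.ofReal_ne_top ENNReal.ofReal_ne_top)]
  exact ENNReal.toReal_mono (volume_dSq_ne_top T.root) hsum


lemma Delta_subset (T : ConvexTree) {k : ℤ} (hk : k ≤ T.root.1) :
    Delta T k ⊆ (frontier (dSq T.root) ∩ latt k) ∪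
      ⋃ b ∈ (badF T).filter (fun b => k ≤ b.1), (frontier (dSq b) ∩ latt k) := by
  classical
  rintro z ⟨hzf, hzl⟩
  by_cases hzr : z ∈ frontier (dSq T.root)
  · exact Or.inl ⟨hzr, hzl⟩
  have hzTk : z ∈ Tk T k := (isClosed_Tk T k).frontier_subset hzf
  have hzR : z ∈ dSq T.root := Tk_subset_root T k hzTk
  have hzint : z ∈ interior (dSq T.root) := by
    rw [← self_diff_frontier]; exact ⟨hzR, hzr⟩
  have hklt : k < T.root.1 := by
    rcases eq_or_lt_of_le hk with heq | hlt
    · exfalso; rw [heq, Tk_root] at hzf; exact hzr hzf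
    · exact hlt
  rw [← Tk_root] at hzint
  have hex : ∃ i : ℕ, z ∈ interior (Tk T (k + 1 + i)) := by
    refine ⟨(T.root.1 - (k+1)).toNat, ?_⟩
    rw [show k + 1 + ((T.root.1 - (k+1)).toNat : ℤ) = T.root.1 by omega]
    exact hzint
  set i := Nat.find hex with hi
  have hfind : z ∈ interior (Tk T (k + 1 + i)) := Nat.find_spec hex
  have hile : (i:ℤ) ≤ T.root.1 - (k+1) := by
    have := Nat.find_min' hex (by
      rw [show k + 1 + ((T.root.1 - (k+1)).toNat : ℤ) = T.root.1 by omega]; exact hzint)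
    omega
  have hnot : z ∉ interior (Tk T (k + i)) := by
    rcases Nat.eq_zero_or_pos i with h0 | hpos
    · rw [h0]
      intro hc
      exact hzf.2 (by simpa using hc)
    · have := Nat.find_min hex (m := i - 1) (by omega)
      intro hc
      apply this
      rw [show k + 1 + ((i:ℕ) - 1 : ℕ) = k + i by omega]
      exact hc
  have hzTki : z ∈ Tk T (k + i) := Tk_mono T (by omega) (by omega) hzTk
  have hnex : ¬ ∀ p q : ℤ, z ∈ dSq (k + (i:ℤ), p, q) → (k + (i:ℤ), p, q) ∈ T.squares := by
    intro hall
    exact hnot (mem_interior_of_all_tree T (k + i) z hall)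
  push_neg at hnex
  obtain ⟨p, q, hzpq, hnsq⟩ := hnex
  set b : ℤ × ℤ × ℤ := (k + (i:ℤ), p, q) with hb
  have hpar : par b ∈ T.squares := by
    apply par_mem_of_interior T hzpq
    have hbe : (b.1 + 1 : ℤ) = k + 1 + i := by
      rw [show b.1 = k + (i:ℤ) from rfl]; ring
    rw [hbe]
    exact hfind
  have hbmem : b ∈ (badF T).filter (fun b => k ≤ b.1) := by
    rw [Finset.mem_filter]
    exact ⟨mem_badF.2 ⟨hnsq, hpar⟩, by rw [show b.1 = k + (i:ℤ) from rfl]; omega⟩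
  have hzfb : z ∈ frontier (dSq b) := by
    refine ⟨subset_closure hzpq, ?_⟩
    intro hc
    have := int_disj_Tk T hnsq
    have : z ∈ (∅ : Set (ℝ × ℝ)) := this ▸ mem_inter hc (by simpa [hb] using hzTki)
    exact this
  exact Or.inr (Set.mem_biUnion hbmem ⟨hzfb, hzl⟩)

lemma perk (T : ConvexTree) {k : ℤ} (hk : k ≤ T.root.1) :
    (2:ℝ)^(2*k) * ((Delta T k).ncard : ℝ) ≤
      8 * 2^k * 2^(T.root.1) + ∑ b ∈ (badF T).filter (fun b => k ≤ b.1), 8 * 2^k * 2^(b.1) := by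
  classical
  set t := (badF T).filter (fun b => k ≤ b.1) with ht
  have hfin : ∀ b ∈ t, (frontier (dSq b) ∩ latt k).Finite := by
    intro b hb
    exact frontier_latt_finite b (Finset.mem_filter.1 hb).2
  have hUfin : ((frontier (dSq T.root) ∩ latt k) ∪
      ⋃ b ∈ t, (frontier (dSq b) ∩ latt k)).Finite :=
    (frontier_latt_finite T.root hk).union
      (Set.Finite.biUnion (Finset.finite_toSet t) hfin)
  have h1 : (Delta T k).ncard ≤ (frontier (dSq T.root) ∩ latt k).ncard +
      ∑ b ∈ t, (frontier (dSq b) ∩ latt k).ncard := by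
    calc (Delta T k).ncard ≤ _ := Set.ncard_le_ncard (Delta_subset T hk) hUfin
      _ ≤ (frontier (dSq T.root) ∩ latt k).ncard + (⋃ b ∈ t, (frontier (dSq b) ∩ latt k)).ncard :=
          Set.ncard_union_le _ _
      _ ≤ _ := by
          exact Nat.add_le_add_left (ncard_biUnion_le t _ hfin) _
  have h2 : ((Delta T k).ncard : ℝ) ≤ 8 * 2^(T.root.1 - k) + ∑ b ∈ t, 8 * 2^(b.1 - k) := by
    calc ((Delta T k).ncard : ℝ) ≤ ((frontier (dSq T.root) ∩ latt k).ncard : ℝ) +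
        ∑ b ∈ t, ((frontier (dSq b) ∩ latt k).ncard : ℝ) := by
          exact_mod_cast h1
      _ ≤ 8 * 2^(T.root.1 - k) + ∑ b ∈ t, 8 * 2^(b.1 - k) := by
          gcongr with b hb
          · exact frontier_latt_card T.root hk
          · exact frontier_latt_card b (Finset.mem_filter.1 hb).2
  have hmul : ∀ r : ℤ, (2:ℝ)^(2*k) * (8 * 2^(r - k)) = 8 * 2^k * 2^r := by
    intro r
    rw [show (8:ℝ) * 2^k * 2^r = 8 * (2^k * 2^r) by ring, ← zpow_add₀ (two_ne_zero : (2:ℝ) ≠ 0)]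
    rw [show (2:ℝ)^(2*k) * (8 * 2^(r-k)) = 8 * (2^(2*k) * 2^(r-k)) by ring,
      ← zpow_add₀ (two_ne_zero : (2:ℝ) ≠ 0)]
    congr 1; ring
  calc (2:ℝ)^(2*k) * ((Delta T k).ncard : ℝ)
      ≤ (2:ℝ)^(2*k) * (8 * 2^(T.root.1 - k) + ∑ b ∈ t, 8 * 2^(b.1 - k)) := by
        exact mul_le_mul_of_nonneg_left h2 (two_zpow_pos _).le
    _ = 8 * 2^k * 2^(T.root.1) + ∑ b ∈ t, 8 * 2^k * 2^(b.1) := by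
        rw [mul_add, hmul, Finset.mul_sum]
        congr 1
        exact Finset.sum_congr rfl (fun b _ => hmul b.1)



lemma level_le_of_delta (T : ConvexTree) {k : ℤ} (h : (Delta T k).ncard ≠ 0) : k ≤ T.root.1 := by
  obtain ⟨z, hzf, hzl⟩ := Set.nonempty_of_ncard_ne_zero h
  have hzTk : z ∈ Tk T k := (isClosed_Tk T k).frontier_subset hzf
  rw [Tk] at hzTk
  simp only [mem_iUnion] at hzTk
  obtain ⟨a, ⟨ha, hl⟩, _⟩ := hzTk
  rw [← hl]
  exact level_le T ha



/-- Lemma 2.1: `∑_k 2^{2k} #Δ(𝒯_k) ≲ |R_𝒯|` for every convex tree `𝒯`. -/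
theorem boundary_count : ∃ C : ℝ, 0 < C ∧ ∀ T : ConvexTree,
    ∑' k : ℤ, (2:ℝ)^(2*k) * ((Delta T k).ncard : ℝ) ≤
      C * (volume (dSq T.root)).toReal := by
  classical
  refine ⟨32, by norm_num, fun T => ?_⟩
  apply tsum_le_of_sum_le' (by positivity)
  intro s
  set f : ℤ → ℝ := fun k => (2:ℝ)^(2*k) * ((Delta T k).ncard : ℝ) with hf
  have hrw : ∑ k ∈ s, f k = ∑ k ∈ s.filter (fun k => f k ≠ 0), f k :=
    (Finset.sum_filter_ne_zero s).symm
  set s' := s.filter (fun k => f k ≠ 0) with hs'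
  have hlev : ∀ k ∈ s', k ≤ T.root.1 := by
    intro k hk
    have hne := (Finset.mem_filter.1 hk).2
    apply level_le_of_delta T
    intro hc
    exact hne (by simp [hf, hc])
  have hvol : (volume (dSq T.root)).toReal = 2^(2*T.root.1) := volume_dSq_toReal T.root
  have step1 : ∑ k ∈ s', f k ≤
      ∑ k ∈ s', (8 * 2^k * 2^(T.root.1) +
        ∑ b ∈ (badF T).filter (fun b => k ≤ b.1), 8 * 2^k * 2^(b.1)) := by
    apply Finset.sum_le_sum
    intro k hk
    exact perk T (hlev k hk)
  have hmain : ∑ k ∈ s', (8 * (2:ℝ)^k * 2^(T.root.1) +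
        ∑ b ∈ (badF T).filter (fun b => k ≤ b.1), 8 * (2:ℝ)^k * 2^(b.1)) ≤
      32 * (volume (dSq T.root)).toReal := by
    rw [Finset.sum_add_distrib]
    have hA : ∑ k ∈ s', 8 * (2:ℝ)^k * 2^(T.root.1) ≤ 16 * (volume (dSq T.root)).toReal := by
      have hgeo := geo_sum s' T.root.1 hlev
      have h2r := two_zpow_pos T.root.1
      calc ∑ k ∈ s', 8 * (2:ℝ)^k * 2^(T.root.1)
          = 8 * 2^(T.root.1) * ∑ k ∈ s', (2:ℝ)^k := by
            rw [Finset.mul_sum]; exact Finset.sum_congr rfl (fun k _ => by ring)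
        _ ≤ 8 * 2^(T.root.1) * 2^(T.root.1 + 1) := by nlinarith [hgeo, Finset.sum_nonneg (fun k (_ : k ∈ s') => (two_zpow_pos k).le)]
        _ = 16 * (volume (dSq T.root)).toReal := by
            rw [hvol, zpow_add₀ (two_ne_zero : (2:ℝ) ≠ 0), two_mul,
              zpow_add₀ (two_ne_zero : (2:ℝ) ≠ 0)]
            ring
    have hB : ∑ k ∈ s', ∑ b ∈ (badF T).filter (fun b => k ≤ b.1), 8 * (2:ℝ)^k * 2^(b.1) ≤
        16 * (volume (dSq T.root)).toReal := by
      have hswap : ∑ k ∈ s', ∑ b ∈ (badF T).filter (fun b => k ≤ b.1), 8 * (2:ℝ)^k * 2^(b.1)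
          = ∑ b ∈ badF T, ∑ k ∈ s'.filter (fun k => k ≤ b.1), 8 * (2:ℝ)^k * 2^(b.1) := by
        have e1 : ∀ k ∈ s', ∑ b ∈ (badF T).filter (fun b => k ≤ b.1), 8 * (2:ℝ)^k * 2^(b.1)
            = ∑ b ∈ badF T, if k ≤ b.1 then 8 * (2:ℝ)^k * 2^(b.1) else 0 :=
          fun k _ => Finset.sum_filter _ _
        have e2 : ∀ b ∈ badF T, ∑ k ∈ s'.filter (fun k => k ≤ b.1), 8 * (2:ℝ)^k * 2^(b.1)
            = ∑ k ∈ s', if k ≤ b.1 then 8 * (2:ℝ)^k * 2^(b.1) else 0 :=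
          fun b _ => Finset.sum_filter _ _
        rw [Finset.sum_congr rfl e1, Finset.sum_congr rfl e2, Finset.sum_comm]
      rw [hswap]
      calc ∑ b ∈ badF T, ∑ k ∈ s'.filter (fun k => k ≤ b.1), 8 * (2:ℝ)^k * 2^(b.1)
          ≤ ∑ b ∈ badF T, 16 * (2:ℝ)^(2*b.1) := by
            apply Finset.sum_le_sum
            intro b _
            have hgeo := geo_sum (s'.filter (fun k => k ≤ b.1)) b.1
              (fun k hk => (Finset.mem_filter.1 hk).2)
            have h2b := two_zpow_pos b.1
            calc ∑ k ∈ s'.filter (fun k => k ≤ b.1), 8 * (2:ℝ)^k * 2^(b.1)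
                = 8 * 2^(b.1) * ∑ k ∈ s'.filter (fun k => k ≤ b.1), (2:ℝ)^k := by
                  rw [Finset.mul_sum]; exact Finset.sum_congr rfl (fun k _ => by ring)
              _ ≤ 8 * 2^(b.1) * 2^(b.1 + 1) := by
                  nlinarith [hgeo, Finset.sum_nonneg
                    (fun k (_ : k ∈ s'.filter (fun k => k ≤ b.1)) => (two_zpow_pos k).le)]
              _ = 16 * (2:ℝ)^(2*b.1) := by
                  rw [zpow_add₀ (two_ne_zero : (2:ℝ) ≠ 0), two_mul,
                    zpow_add₀ (two_ne_zero : (2:ℝ) ≠ 0)]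
                  ring
        _ = 16 * ∑ b ∈ badF T, (2:ℝ)^(2*b.1) := by rw [Finset.mul_sum]
        _ ≤ 16 * (volume (dSq T.root)).toReal := by
            have := bad_measure T
            nlinarith [this]
    linarith
  calc ∑ k ∈ s, f k = ∑ k ∈ s', f k := hrw
    _ ≤ _ := step1
    _ ≤ 32 * (volume (dSq T.root)).toReal := hmain

end
end

section
/- Let F₁,F₂,F₃,F₄ be bounded, positive, measurable functions on ℝ² with finite measure support and let 𝒞 be a collection of dyadic squares. Then for every (p,q,t) ∈ Ω_𝒞 one has F * [ϑ⊗ϑ⊗ϑ⊗ϑ]_t(p,q,p,q) ≤ ∏_{j=1}^4 M(F_j,𝒞), where F is the entangled product of F₁,F₂,F₃,F₄. -/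
open MeasureTheory Set

noncomputable section

def wt (t p x : ℝ) : ℝ := t⁻¹ * vth ((p - x) / t)

lemma vth_nonneg (x : ℝ) : 0 ≤ vth x := by unfold vth; positivity

lemma vth_cont : Continuous vth :=
  ((continuous_const.add continuous_abs).pow 4).inv₀ (fun x => by
    have : (0:ℝ) < 1 + |x| := by positivity
    exact pow_ne_zero _ this.ne')

lemma en_cont : Continuous en :=
  Real.continuous_sqrt.comp ((continuous_fst.pow 2).add (continuous_snd.pow 2))

lemma theta_cont : Continuous theta :=
  (continuous_const.add (en_cont.pow 4)).inv₀ (fun z => by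
    have := Real.sqrt_nonneg (z.1^2 + z.2^2)
    exact ne_of_gt (by positivity : (0:ℝ) < 1 + en z ^ 4))

lemma theta_nonneg (z : ℝ × ℝ) : 0 ≤ theta z := by
  unfold theta en; positivity

lemma en4 (a b : ℝ) : en (a, b) ^ 4 = (a^2 + b^2)^2 := by
  unfold en
  rw [show (4 : ℕ) = 2 * 2 from rfl, pow_mul, Real.sq_sqrt (by positivity)]

lemma vth_le (x : ℝ) : vth x ≤ (1 + x^2)⁻¹ := by
  unfold vth
  have h1 : (0:ℝ) < 1 + x^2 := by positivity
  have h2 : 1 + x^2 ≤ (1 + |x|)^4 := by nlinarith [abs_nonneg x, sq_abs x]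
  exact inv_anti₀ h1 h2

lemma vth_mul_vth_le_theta (a b : ℝ) : vth a * vth b ≤ theta (a, b) := by
  unfold vth theta
  rw [en4, ← mul_inv]
  have hA := abs_nonneg a
  have hB := abs_nonneg b
  have h1 : 1 + (a^2 + b^2)^2 ≤ ((1 + a^2) * (1 + b^2))^2 := by
    nlinarith [sq_nonneg (a*b), sq_nonneg a, sq_nonneg b, sq_nonneg (a^2 + b^2),
      mul_nonneg (sq_nonneg a) (sq_nonneg b)]
  have h2 : (1 + a^2) ≤ (1 + |a|)^2 := by nlinarith [sq_abs a]
  have h3 : (1 + b^2) ≤ (1 + |b|)^2 := by nlinarith [sq_abs b]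
  have h4 : (1 + a^2) * (1 + b^2) ≤ (1 + |a|)^2 * (1 + |b|)^2 :=
    mul_le_mul h2 h3 (by positivity) (by positivity)
  have h5 : ((1 + a^2) * (1 + b^2))^2 ≤ ((1 + |a|)^2 * (1 + |b|)^2)^2 :=
    pow_le_pow_left₀ (by positivity) h4 2
  have h6 : 1 + (a^2 + b^2)^2 ≤ (1 + |a|)^4 * (1 + |b|)^4 := by nlinarith
  exact inv_anti₀ (by positivity) h6

lemma theta_le_two_mul (a b : ℝ) : theta (a, b) ≤ 2 * ((1 + a^2)⁻¹ * (1 + b^2)⁻¹) := by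
  unfold theta
  rw [en4]
  have key : (1 + a^2) * (1 + b^2) ≤ 2 * (1 + (a^2 + b^2)^2) := by
    nlinarith [sq_nonneg a, sq_nonneg b, sq_nonneg (a^2 + b^2), sq_nonneg (a*b),
      sq_nonneg (a^2 + b^2 - 1)]
  have h2 : (1 + (a^2 + b^2)^2)⁻¹ ≤ (((1 + a^2) * (1 + b^2)) / 2)⁻¹ :=
    inv_anti₀ (by positivity) (by linarith)
  calc (1 + (a^2 + b^2)^2)⁻¹ ≤ (((1 + a^2) * (1 + b^2)) / 2)⁻¹ := h2
    _ = 2 * ((1 + a^2)⁻¹ * (1 + b^2)⁻¹) := by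
        rw [inv_div, div_eq_mul_inv, mul_inv]

lemma wt_nonneg (t p x : ℝ) (ht : 0 < t) : 0 ≤ wt t p x :=
  mul_nonneg (by positivity) (vth_nonneg _)

lemma wt_meas (t p : ℝ) : Measurable (wt t p) := by
  unfold wt
  exact (continuous_const.mul (vth_cont.comp (by continuity))).measurable

lemma wg_int (p t : ℝ) (ht : 0 < t) :
    Integrable (fun x : ℝ => t⁻¹ * (1 + ((p - x)/t)^2)⁻¹) :=
  (((integrable_inv_one_add_sq.comp_div ht.ne').comp_sub_left p).const_mul t⁻¹)

lemma wg_integral (p t : ℝ) (ht : 0 < t) :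
    ∫ x : ℝ, t⁻¹ * (1 + ((p - x)/t)^2)⁻¹ = ∫ x : ℝ, (1 + x^2)⁻¹ := by
  rw [integral_const_mul]
  have h1 : ∫ x : ℝ, (1 + ((p - x)/t)^2)⁻¹ = ∫ x : ℝ, (1 + (x/t)^2)⁻¹ :=
    integral_sub_left_eq_self (fun x => (1 + (x/t)^2)⁻¹) volume p
  rw [h1, MeasureTheory.Measure.integral_comp_div (fun x => (1 + x^2)⁻¹) t,
    smul_eq_mul, abs_of_pos ht, ← mul_assoc, inv_mul_cancel₀ ht.ne', one_mul]

lemma wt_int (t p : ℝ) (ht : 0 < t) : Integrable (wt t p) := by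
  apply (wg_int p t ht).mono' (wt_meas t p).aestronglyMeasurable
  refine ae_of_all _ fun x => ?_
  rw [Real.norm_of_nonneg (wt_nonneg t p x ht)]
  unfold wt
  exact mul_le_mul_of_nonneg_left (vth_le _) (by positivity)

def wpair (u v : ℝ → ℝ) : ℝ × ℝ → ℝ := fun z => u z.1 * v z.2

def qfun (F : ℝ × ℝ → ℝ) (u v : ℝ → ℝ) : ℝ × ℝ → ℝ := fun z => F z ^ 2 * wpair u v z

def Gfun (F1 F2 F3 F4 : ℝ × ℝ → ℝ) (u v : ℝ → ℝ) : (ℝ × ℝ) × (ℝ × ℝ) → ℝ := fun ω =>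
  F1 ω.1 * F2 (ω.2.1, ω.1.2) * F3 ω.2 * F4 (ω.1.1, ω.2.2) * (wpair u v ω.1 * wpair u v ω.2)

lemma core (F1 F2 F3 F4 : ℝ × ℝ → ℝ) (B1 B2 B3 B4 : ℝ) (u v : ℝ → ℝ)
    (m1 : Measurable F1) (m2 : Measurable F2) (m3 : Measurable F3) (m4 : Measurable F4)
    (n1 : ∀ z, 0 ≤ F1 z) (n2 : ∀ z, 0 ≤ F2 z) (n3 : ∀ z, 0 ≤ F3 z) (n4 : ∀ z, 0 ≤ F4 z)
    (b1 : ∀ z, F1 z ≤ B1) (b2 : ∀ z, F2 z ≤ B2) (b3 : ∀ z, F3 z ≤ B3) (b4 : ∀ z, F4 z ≤ B4)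
    (hum : Measurable u) (hvm : Measurable v)
    (hu0 : ∀ x, 0 ≤ u x) (hv0 : ∀ x, 0 ≤ v x)
    (hu : Integrable u) (hv : Integrable v) :
    (∫ x : ℝ, ∫ y : ℝ, ∫ x' : ℝ, ∫ y' : ℝ, Gfun F1 F2 F3 F4 u v ((x, y), (x', y'))) ≤
      Real.sqrt (∫ z : ℝ × ℝ, qfun F1 u v z) * Real.sqrt (∫ z : ℝ × ℝ, qfun F2 u v z) *
      (Real.sqrt (∫ z : ℝ × ℝ, qfun F3 u v z) * Real.sqrt (∫ z : ℝ × ℝ, qfun F4 u v z)) := by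
  have hB1 : 0 ≤ B1 := (n1 (0,0)).trans (b1 (0,0))
  have hB2 : 0 ≤ B2 := (n2 (0,0)).trans (b2 (0,0))
  have hB3 : 0 ≤ B3 := (n3 (0,0)).trans (b3 (0,0))
  have hB4 : 0 ≤ B4 := (n4 (0,0)).trans (b4 (0,0))
  have hwm : Measurable (wpair u v) := (hum.comp measurable_fst).mul (hvm.comp measurable_snd)
  have hw0 : ∀ z : ℝ × ℝ, 0 ≤ wpair u v z := fun z => mul_nonneg (hu0 _) (hv0 _)
  have hwi : Integrable (wpair u v) := by
    rw [MeasureTheory.Measure.volume_eq_prod]; exact hu.mul_prod hv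
  have prodBound : ∀ ω : (ℝ × ℝ) × (ℝ × ℝ),
      F1 ω.1 * F2 (ω.2.1, ω.1.2) * F3 ω.2 * F4 (ω.1.1, ω.2.2) ≤ B1 * B2 * B3 * B4 := fun ω =>
    mul_le_mul (mul_le_mul (mul_le_mul (b1 _) (b2 _) (n2 _) hB1) (b3 _) (n3 _)
      (mul_nonneg hB1 hB2)) (b4 _) (n4 _) (mul_nonneg (mul_nonneg hB1 hB2) hB3)
  have hG0 : ∀ ω, 0 ≤ Gfun F1 F2 F3 F4 u v ω := fun ω =>
    mul_nonneg (mul_nonneg (mul_nonneg (mul_nonneg (n1 _) (n2 _)) (n3 _)) (n4 _))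
      (mul_nonneg (hw0 _) (hw0 _))
  have hGb : ∀ ω, Gfun F1 F2 F3 F4 u v ω ≤
      (B1 * B2 * B3 * B4) * (wpair u v ω.1 * wpair u v ω.2) := fun ω =>
    mul_le_mul_of_nonneg_right (prodBound ω) (mul_nonneg (hw0 _) (hw0 _))
  have hGb' : ∀ (z z' : ℝ × ℝ), Gfun F1 F2 F3 F4 u v (z, z') ≤
      (B1 * B2 * B3 * B4 * wpair u v z) * wpair u v z' := fun z z' =>
    le_trans (hGb (z, z')) (le_of_eq (by ring))
  have hGm : Measurable (Gfun F1 F2 F3 F4 u v) :=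
    ((((m1.comp measurable_fst).mul
      (m2.comp ((measurable_snd.fst).prodMk measurable_fst.snd))).mul
      (m3.comp measurable_snd)).mul
      (m4.comp ((measurable_fst.fst).prodMk measurable_snd.snd))).mul
      ((hwm.comp measurable_fst).mul (hwm.comp measurable_snd))
  have hGi : Integrable (Gfun F1 F2 F3 F4 u v)
      ((volume : Measure (ℝ × ℝ)).prod volume) := by
    apply ((hwi.mul_prod hwi).const_mul (B1 * B2 * B3 * B4)).mono' hGm.aestronglyMeasurable
    exact ae_of_all _ fun ω => by rw [Real.norm_of_nonneg (hG0 ω)]; exact hGb ω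
  have hslice : ∀ z : ℝ × ℝ,
      Integrable (fun z' : ℝ × ℝ => Gfun F1 F2 F3 F4 u v (z, z')) := by
    intro z
    apply (hwi.const_mul (B1 * B2 * B3 * B4 * wpair u v z)).mono'
      ((hGm.comp (measurable_prodMk_left) :
        Measurable fun z' : ℝ × ℝ => Gfun F1 F2 F3 F4 u v (z, z')).aestronglyMeasurable)
    exact ae_of_all _ fun z' => by
      simp only [Function.comp_apply]
      rw [Real.norm_of_nonneg (hG0 (z, z'))]; exact hGb' z z'
  have inner_eq : ∀ z : ℝ × ℝ,
      (∫ x' : ℝ, ∫ y' : ℝ, Gfun F1 F2 F3 F4 u v (z, (x', y'))) =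
        ∫ z' : ℝ × ℝ, Gfun F1 F2 F3 F4 u v (z, z') := by
    intro z
    rw [MeasureTheory.Measure.volume_eq_prod]
    exact integral_integral (f := fun x' y' => Gfun F1 F2 F3 F4 u v (z, (x', y'))) (hslice z)
  have hPhi_sm : StronglyMeasurable
      (fun z : ℝ × ℝ => ∫ z' : ℝ × ℝ, Gfun F1 F2 F3 F4 u v (z, z')) :=
    hGm.stronglyMeasurable.integral_prod_right'
  have hPhi0 : ∀ z : ℝ × ℝ, 0 ≤ ∫ z' : ℝ × ℝ, Gfun F1 F2 F3 F4 u v (z, z') := fun z =>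
    integral_nonneg fun z' => hG0 (z, z')
  have hPhib : ∀ z : ℝ × ℝ, (∫ z' : ℝ × ℝ, Gfun F1 F2 F3 F4 u v (z, z')) ≤
      (B1 * B2 * B3 * B4 * (∫ z' : ℝ × ℝ, wpair u v z')) * wpair u v z := by
    intro z
    have step : (∫ z' : ℝ × ℝ, Gfun F1 F2 F3 F4 u v (z, z')) ≤
        ∫ z' : ℝ × ℝ, (B1 * B2 * B3 * B4 * wpair u v z) * wpair u v z' :=
      integral_mono_of_nonneg (ae_of_all _ fun z' => hG0 (z, z')) (hwi.const_mul _)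
        (ae_of_all _ fun z' => hGb' z z')
    rw [integral_const_mul] at step
    exact step.trans (le_of_eq (by ring))
  have hPhii : Integrable (fun z : ℝ × ℝ => ∫ z' : ℝ × ℝ, Gfun F1 F2 F3 F4 u v (z, z')) := by
    apply (hwi.const_mul (B1 * B2 * B3 * B4 * (∫ z' : ℝ × ℝ, wpair u v z'))).mono'
      hPhi_sm.aestronglyMeasurable
    exact ae_of_all _ fun z => by rw [Real.norm_of_nonneg (hPhi0 z)]; exact hPhib z
  have outer_eq : (∫ x : ℝ, ∫ y : ℝ, ∫ z' : ℝ × ℝ, Gfun F1 F2 F3 F4 u v ((x, y), z')) =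
      ∫ z : ℝ × ℝ, ∫ z' : ℝ × ℝ, Gfun F1 F2 F3 F4 u v (z, z') := by
    rw [MeasureTheory.Measure.volume_eq_prod]
    exact integral_integral
      (f := fun x y => ∫ z' : ℝ × ℝ, Gfun F1 F2 F3 F4 u v ((x, y), z')) hPhii
  have flat : (∫ z : ℝ × ℝ, ∫ z' : ℝ × ℝ, Gfun F1 F2 F3 F4 u v (z, z')) =
      ∫ ω, Gfun F1 F2 F3 F4 u v ω ∂((volume : Measure (ℝ × ℝ)).prod volume) :=
    integral_integral (f := fun z z' => Gfun F1 F2 F3 F4 u v (z, z')) hGi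
  -- q facts
  have hq_nonneg : ∀ (F : ℝ × ℝ → ℝ) (z : ℝ × ℝ), 0 ≤ qfun F u v z := fun F z =>
    mul_nonneg (sq_nonneg _) (hw0 z)
  have hq_le : ∀ (F : ℝ × ℝ → ℝ) (B : ℝ), (∀ z, 0 ≤ F z) → (∀ z, F z ≤ B) →
      ∀ z, qfun F u v z ≤ B ^ 2 * wpair u v z := fun F B nF bF z =>
    mul_le_mul_of_nonneg_right (pow_le_pow_left₀ (nF z) (bF z) 2) (hw0 z)
  have hq_meas : ∀ (F : ℝ × ℝ → ℝ), Measurable F → Measurable (qfun F u v) := fun F mF =>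
    (mF.pow_const 2).mul hwm
  have hq_int : ∀ (F : ℝ × ℝ → ℝ) (B : ℝ), Measurable F → (∀ z, 0 ≤ F z) → (∀ z, F z ≤ B) →
      Integrable (qfun F u v) := by
    intro F B mF nF bF
    apply (hwi.const_mul (B ^ 2)).mono' (hq_meas F mF).aestronglyMeasurable
    exact ae_of_all _ fun z => by
      rw [Real.norm_of_nonneg (hq_nonneg F z)]; exact hq_le F B nF bF z
  have hq1i := hq_int F1 B1 m1 n1 b1
  have hq2i := hq_int F2 B2 m2 n2 b2
  have hq3i := hq_int F3 B3 m3 n3 b3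
  have hq4i := hq_int F4 B4 m4 n4 b4
  have hS1 : 0 ≤ ∫ z : ℝ × ℝ, qfun F1 u v z := integral_nonneg (hq_nonneg F1)
  have hS2 : 0 ≤ ∫ z : ℝ × ℝ, qfun F2 u v z := integral_nonneg (hq_nonneg F2)
  have hww : ∀ ω : (ℝ × ℝ) × (ℝ × ℝ), 0 ≤ wpair u v ω.1 * wpair u v ω.2 := fun ω =>
    mul_nonneg (hw0 _) (hw0 _)
  have ha2 : ∀ ω : (ℝ × ℝ) × (ℝ × ℝ),
      (F1 ω.1 * F3 ω.2 * Real.sqrt (wpair u v ω.1 * wpair u v ω.2)) ^ 2 =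
        qfun F1 u v ω.1 * qfun F3 u v ω.2 := fun ω => by
    rw [mul_pow, mul_pow, Real.sq_sqrt (hww ω)]
    simp only [qfun]; ring
  have hb2 : ∀ ω : (ℝ × ℝ) × (ℝ × ℝ),
      (F2 (ω.2.1, ω.1.2) * F4 (ω.1.1, ω.2.2) * Real.sqrt (wpair u v ω.1 * wpair u v ω.2)) ^ 2 =
        qfun F2 u v (ω.2.1, ω.1.2) * qfun F4 u v (ω.1.1, ω.2.2) := fun ω => by
    rw [mul_pow, mul_pow, Real.sq_sqrt (hww ω)]
    simp only [qfun, wpair]; ring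
  have ham : Measurable (fun ω : (ℝ × ℝ) × (ℝ × ℝ) =>
      F1 ω.1 * F3 ω.2 * Real.sqrt (wpair u v ω.1 * wpair u v ω.2)) :=
    ((m1.comp measurable_fst).mul (m3.comp measurable_snd)).mul
      (((hwm.comp measurable_fst).mul (hwm.comp measurable_snd)).sqrt)
  have hbm : Measurable (fun ω : (ℝ × ℝ) × (ℝ × ℝ) =>
      F2 (ω.2.1, ω.1.2) * F4 (ω.1.1, ω.2.2) * Real.sqrt (wpair u v ω.1 * wpair u v ω.2)) :=
    ((m2.comp ((measurable_snd.fst).prodMk measurable_fst.snd)).mul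
      (m4.comp ((measurable_fst.fst).prodMk measurable_snd.snd))).mul
      (((hwm.comp measurable_fst).mul (hwm.comp measurable_snd)).sqrt)
  have hai2 : Integrable (fun ω : (ℝ × ℝ) × (ℝ × ℝ) =>
      (F1 ω.1 * F3 ω.2 * Real.sqrt (wpair u v ω.1 * wpair u v ω.2)) ^ 2)
      ((volume : Measure (ℝ × ℝ)).prod volume) := by
    rw [show (fun ω : (ℝ × ℝ) × (ℝ × ℝ) =>
        (F1 ω.1 * F3 ω.2 * Real.sqrt (wpair u v ω.1 * wpair u v ω.2)) ^ 2) =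
        fun ω => qfun F1 u v ω.1 * qfun F3 u v ω.2 from funext ha2]
    exact hq1i.mul_prod hq3i
  have qq_bound : ∀ ω : (ℝ × ℝ) × (ℝ × ℝ),
      qfun F2 u v (ω.2.1, ω.1.2) * qfun F4 u v (ω.1.1, ω.2.2) ≤
        B2 ^ 2 * B4 ^ 2 * (wpair u v ω.1 * wpair u v ω.2) := by
    intro ω
    calc qfun F2 u v (ω.2.1, ω.1.2) * qfun F4 u v (ω.1.1, ω.2.2) ≤
        (B2 ^ 2 * wpair u v (ω.2.1, ω.1.2)) * (B4 ^ 2 * wpair u v (ω.1.1, ω.2.2)) :=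
          mul_le_mul (hq_le F2 B2 n2 b2 _) (hq_le F4 B4 n4 b4 _) (hq_nonneg F4 _)
            (mul_nonneg (by positivity) (hw0 _))
      _ = B2 ^ 2 * B4 ^ 2 * (wpair u v ω.1 * wpair u v ω.2) := by
          simp only [wpair]; ring
  have hbi2 : Integrable (fun ω : (ℝ × ℝ) × (ℝ × ℝ) =>
      (F2 (ω.2.1, ω.1.2) * F4 (ω.1.1, ω.2.2) * Real.sqrt (wpair u v ω.1 * wpair u v ω.2)) ^ 2)
      ((volume : Measure (ℝ × ℝ)).prod volume) := by
    apply ((hwi.mul_prod hwi).const_mul (B2 ^ 2 * B4 ^ 2)).mono'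
      (hbm.pow_const 2).aestronglyMeasurable
    refine ae_of_all _ fun ω => ?_
    rw [Real.norm_of_nonneg (sq_nonneg _), hb2 ω]
    exact qq_bound ω
  have hMa : MemLp (fun ω : (ℝ × ℝ) × (ℝ × ℝ) =>
      F1 ω.1 * F3 ω.2 * Real.sqrt (wpair u v ω.1 * wpair u v ω.2)) (ENNReal.ofReal 2)
      ((volume : Measure (ℝ × ℝ)).prod volume) := by
    rw [show ENNReal.ofReal (2:ℝ) = 2 from by norm_num]
    exact (memLp_two_iff_integrable_sq ham.aestronglyMeasurable).2 hai2
  have hMb : MemLp (fun ω : (ℝ × ℝ) × (ℝ × ℝ) =>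
      F2 (ω.2.1, ω.1.2) * F4 (ω.1.1, ω.2.2) * Real.sqrt (wpair u v ω.1 * wpair u v ω.2))
      (ENNReal.ofReal 2) ((volume : Measure (ℝ × ℝ)).prod volume) := by
    rw [show ENNReal.ofReal (2:ℝ) = 2 from by norm_num]
    exact (memLp_two_iff_integrable_sq hbm.aestronglyMeasurable).2 hbi2
  have cs := integral_mul_le_Lp_mul_Lq_of_nonneg
    (μ := (volume : Measure (ℝ × ℝ)).prod volume) (p := 2) (q := 2)
    Real.HolderConjugate.two_two
    (f := fun ω => F1 ω.1 * F3 ω.2 * Real.sqrt (wpair u v ω.1 * wpair u v ω.2))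
    (g := fun ω => F2 (ω.2.1, ω.1.2) * F4 (ω.1.1, ω.2.2) *
      Real.sqrt (wpair u v ω.1 * wpair u v ω.2))
    (ae_of_all _ fun ω => mul_nonneg (mul_nonneg (n1 _) (n3 _)) (Real.sqrt_nonneg _))
    (ae_of_all _ fun ω => mul_nonneg (mul_nonneg (n2 _) (n4 _)) (Real.sqrt_nonneg _))
    hMa hMb
  have e2 : ∀ x : ℝ, x ^ (2:ℝ) = x ^ 2 := fun x => by
    rw [show (2:ℝ) = ((2:ℕ):ℝ) by norm_num, Real.rpow_natCast]
  simp only [e2] at cs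
  have eA : (∫ ω : (ℝ × ℝ) × (ℝ × ℝ),
      (F1 ω.1 * F3 ω.2 * Real.sqrt (wpair u v ω.1 * wpair u v ω.2)) ^ 2
      ∂((volume : Measure (ℝ × ℝ)).prod volume)) =
      (∫ z : ℝ × ℝ, qfun F1 u v z) * ∫ z : ℝ × ℝ, qfun F3 u v z := by
    rw [integral_congr_ae (ae_of_all _ ha2)]
    exact integral_prod_mul (qfun F1 u v) (qfun F3 u v)
  have hQi : Integrable (fun ω : (ℝ × ℝ) × (ℝ × ℝ) =>
      qfun F2 u v (ω.2.1, ω.1.2) * qfun F4 u v (ω.1.1, ω.2.2))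
      ((volume : Measure (ℝ × ℝ)).prod volume) := by
    apply ((hwi.mul_prod hwi).const_mul (B2 ^ 2 * B4 ^ 2)).mono'
      (((hq_meas F2 m2).comp ((measurable_snd.fst).prodMk measurable_fst.snd)).mul
        ((hq_meas F4 m4).comp
          ((measurable_fst.fst).prodMk measurable_snd.snd))).aestronglyMeasurable
    refine ae_of_all _ fun ω => ?_
    show ‖qfun F2 u v (ω.2.1, ω.1.2) * qfun F4 u v (ω.1.1, ω.2.2)‖ ≤
      B2 ^ 2 * B4 ^ 2 * (wpair u v ω.1 * wpair u v ω.2)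
    rw [Real.norm_of_nonneg (mul_nonneg (hq_nonneg F2 _) (hq_nonneg F4 _))]
    exact qq_bound ω
  have eB : (∫ ω : (ℝ × ℝ) × (ℝ × ℝ),
      (F2 (ω.2.1, ω.1.2) * F4 (ω.1.1, ω.2.2) * Real.sqrt (wpair u v ω.1 * wpair u v ω.2)) ^ 2
      ∂((volume : Measure (ℝ × ℝ)).prod volume)) =
      (∫ z : ℝ × ℝ, qfun F2 u v z) * ∫ z : ℝ × ℝ, qfun F4 u v z := by
    rw [integral_congr_ae (ae_of_all _ hb2)]
    rw [← integral_integral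
      (f := fun z z' : ℝ × ℝ => qfun F2 u v (z'.1, z.2) * qfun F4 u v (z.1, z'.2)) hQi]
    have inner2 : ∀ z : ℝ × ℝ,
        (∫ z' : ℝ × ℝ, qfun F2 u v (z'.1, z.2) * qfun F4 u v (z.1, z'.2)) =
          (fun x : ℝ => ∫ y' : ℝ, qfun F4 u v (x, y')) z.1 *
            (fun y : ℝ => ∫ x' : ℝ, qfun F2 u v (x', y)) z.2 := by
      intro z
      rw [MeasureTheory.Measure.volume_eq_prod,
        integral_prod_mul (f := fun x' : ℝ => qfun F2 u v (x', z.2))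
          (g := fun y' : ℝ => qfun F4 u v (z.1, y'))]
      exact mul_comm _ _
    rw [integral_congr_ae (ae_of_all _ inner2), MeasureTheory.Measure.volume_eq_prod,
      integral_prod_mul (f := fun x : ℝ => ∫ y' : ℝ, qfun F4 u v (x, y'))
        (g := fun y : ℝ => ∫ x' : ℝ, qfun F2 u v (x', y))]
    have e4 : (∫ x : ℝ, ∫ y' : ℝ, qfun F4 u v (x, y')) = ∫ z : ℝ × ℝ, qfun F4 u v z := by
      rw [MeasureTheory.Measure.volume_eq_prod]
      exact integral_integral (f := fun x y' => qfun F4 u v (x, y')) hq4i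
    have e2' : (∫ y : ℝ, ∫ x' : ℝ, qfun F2 u v (x', y)) = ∫ z : ℝ × ℝ, qfun F2 u v z := by
      rw [← integral_integral_swap (f := fun x' y => qfun F2 u v (x', y)) hq2i,
        integral_integral (f := fun x' y => qfun F2 u v (x', y)) hq2i]
      rfl
    rw [e4, e2']
    exact mul_comm _ _
  rw [eA, eB, ← Real.sqrt_eq_rpow, ← Real.sqrt_eq_rpow] at cs
  calc (∫ x : ℝ, ∫ y : ℝ, ∫ x' : ℝ, ∫ y' : ℝ, Gfun F1 F2 F3 F4 u v ((x, y), (x', y')))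
      = ∫ x : ℝ, ∫ y : ℝ, ∫ z' : ℝ × ℝ, Gfun F1 F2 F3 F4 u v ((x, y), z') := by
        refine integral_congr_ae (ae_of_all _ fun x => ?_)
        exact integral_congr_ae (ae_of_all _ fun y => inner_eq (x, y))
    _ = ∫ z : ℝ × ℝ, ∫ z' : ℝ × ℝ, Gfun F1 F2 F3 F4 u v (z, z') := outer_eq
    _ = ∫ ω, Gfun F1 F2 F3 F4 u v ω ∂((volume : Measure (ℝ × ℝ)).prod volume) := flat
    _ = ∫ ω : (ℝ × ℝ) × (ℝ × ℝ),
          (F1 ω.1 * F3 ω.2 * Real.sqrt (wpair u v ω.1 * wpair u v ω.2)) *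
          (F2 (ω.2.1, ω.1.2) * F4 (ω.1.1, ω.2.2) * Real.sqrt (wpair u v ω.1 * wpair u v ω.2))
          ∂((volume : Measure (ℝ × ℝ)).prod volume) := by
        refine integral_congr_ae (ae_of_all _ fun ω => ?_)
        simp only [Gfun]
        rw [show (F1 ω.1 * F3 ω.2 * Real.sqrt (wpair u v ω.1 * wpair u v ω.2)) *
          (F2 (ω.2.1, ω.1.2) * F4 (ω.1.1, ω.2.2) * Real.sqrt (wpair u v ω.1 * wpair u v ω.2)) =
          F1 ω.1 * F2 (ω.2.1, ω.1.2) * F3 ω.2 * F4 (ω.1.1, ω.2.2) *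
          (Real.sqrt (wpair u v ω.1 * wpair u v ω.2) *
            Real.sqrt (wpair u v ω.1 * wpair u v ω.2)) from by ring,
          Real.mul_self_sqrt (hww ω)]
    _ ≤ Real.sqrt ((∫ z : ℝ × ℝ, qfun F1 u v z) * ∫ z : ℝ × ℝ, qfun F3 u v z) *
        Real.sqrt ((∫ z : ℝ × ℝ, qfun F2 u v z) * ∫ z : ℝ × ℝ, qfun F4 u v z) := cs
    _ = _ := by
        rw [Real.sqrt_mul hS1, Real.sqrt_mul hS2]; ring


lemma omega_t_pos {C : Set (ℤ × ℤ × ℤ)} {p q t : ℝ} (hw : ((p, q), t) ∈ Omega C) : 0 < t := by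
  simp only [Omega, mem_iUnion] at hw
  obtain ⟨a, _, hmem⟩ := hw
  have h1 : t ∈ Icc ((2:ℝ)^a.1 / 2) ((2:ℝ)^a.1) := hmem.2
  have h2 : (0:ℝ) < (2:ℝ)^a.1 / 2 := by positivity
  exact h2.trans_le h1.1

lemma wt_mul_wt_le (t p q x y : ℝ) (ht : 0 < t) :
    wt t p x * wt t q y ≤ (t^2)⁻¹ * theta ((p - x)/t, (q - y)/t) := by
  unfold wt
  have h := vth_mul_vth_le_theta ((p - x)/t) ((q - y)/t)
  calc t⁻¹ * vth ((p - x)/t) * (t⁻¹ * vth ((q - y)/t))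
      = (t^2)⁻¹ * (vth ((p - x)/t) * vth ((q - y)/t)) := by
        rw [sq, mul_inv]; ring
    _ ≤ (t^2)⁻¹ * theta ((p - x)/t, (q - y)/t) :=
        mul_le_mul_of_nonneg_left h (by positivity)

lemma point_bound (F : ℝ × ℝ → ℝ) (B : ℝ) (hb : ∀ z, |F z| ≤ B) (p q t : ℝ) (ht : 0 < t) :
    ∀ z : ℝ × ℝ, F z ^ 2 * ((t^2)⁻¹ * theta ((p - z.1)/t, (q - z.2)/t)) ≤
      (2 * B^2) * ((t⁻¹ * (1 + ((p - z.1)/t)^2)⁻¹) * (t⁻¹ * (1 + ((q - z.2)/t)^2)⁻¹)) := by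
  intro z
  have h1 : F z ^ 2 ≤ B ^ 2 := by
    have h := hb z
    nlinarith [abs_nonneg (F z), sq_abs (F z)]
  have h3 := theta_le_two_mul ((p - z.1)/t) ((q - z.2)/t)
  have h2 : (t^2)⁻¹ * theta ((p - z.1)/t, (q - z.2)/t) ≤
      2 * ((t⁻¹ * (1 + ((p - z.1)/t)^2)⁻¹) * (t⁻¹ * (1 + ((q - z.2)/t)^2)⁻¹)) := by
    calc (t^2)⁻¹ * theta ((p - z.1)/t, (q - z.2)/t)
        ≤ (t^2)⁻¹ * (2 * ((1 + ((p - z.1)/t)^2)⁻¹ * (1 + ((q - z.2)/t)^2)⁻¹)) :=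
          mul_le_mul_of_nonneg_left h3 (by positivity)
      _ = 2 * ((t⁻¹ * (1 + ((p - z.1)/t)^2)⁻¹) * (t⁻¹ * (1 + ((q - z.2)/t)^2)⁻¹)) := by
          rw [sq, mul_inv]; ring
  have h4 : 0 ≤ (t^2)⁻¹ * theta ((p - z.1)/t, (q - z.2)/t) :=
    mul_nonneg (by positivity) (theta_nonneg _)
  calc F z ^ 2 * ((t^2)⁻¹ * theta ((p - z.1)/t, (q - z.2)/t))
      ≤ B^2 * (2 * ((t⁻¹ * (1 + ((p - z.1)/t)^2)⁻¹) * (t⁻¹ * (1 + ((q - z.2)/t)^2)⁻¹))) :=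
        mul_le_mul h1 h2 h4 (by positivity)
    _ = (2 * B^2) * ((t⁻¹ * (1 + ((p - z.1)/t)^2)⁻¹) * (t⁻¹ * (1 + ((q - z.2)/t)^2)⁻¹)) := by
        ring

lemma theta_comp_meas (p q t : ℝ) :
    Measurable (fun z : ℝ × ℝ => theta ((p - z.1)/t, (q - z.2)/t)) :=
  theta_cont.measurable.comp
    (((measurable_const.sub measurable_fst).div_const t).prodMk
      ((measurable_const.sub measurable_snd).div_const t))

lemma convTheta_integrand_int (F : ℝ × ℝ → ℝ) (B : ℝ) (hm : Measurable F) (hb : ∀ z, |F z| ≤ B)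
    (p q t : ℝ) (ht : 0 < t) :
    Integrable (fun z : ℝ × ℝ => F z ^ 2 * ((t^2)⁻¹ * theta ((p - z.1)/t, (q - z.2)/t))) := by
  have hmaj : Integrable (fun z : ℝ × ℝ =>
      (2 * B^2) * ((t⁻¹ * (1 + ((p - z.1)/t)^2)⁻¹) * (t⁻¹ * (1 + ((q - z.2)/t)^2)⁻¹))) := by
    rw [MeasureTheory.Measure.volume_eq_prod]
    exact ((wg_int p t ht).mul_prod (wg_int q t ht)).const_mul _
  apply hmaj.mono'
  · exact ((hm.pow_const 2).mul
      (measurable_const.mul (theta_comp_meas p q t))).aestronglyMeasurable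
  · refine ae_of_all _ fun z => ?_
    rw [Real.norm_of_nonneg (mul_nonneg (sq_nonneg _)
      (mul_nonneg (by positivity) (theta_nonneg _)))]
    exact point_bound F B hb p q t ht z

lemma convTheta_le (F : ℝ × ℝ → ℝ) (B : ℝ) (hm : Measurable F) (hb : ∀ z, |F z| ≤ B)
    (p q t : ℝ) (ht : 0 < t) :
    convTheta F p q t ≤ 2 * B^2 * (∫ x : ℝ, (1 + x^2)⁻¹) ^ 2 := by
  have hmaj : Integrable (fun z : ℝ × ℝ =>
      (2 * B^2) * ((t⁻¹ * (1 + ((p - z.1)/t)^2)⁻¹) * (t⁻¹ * (1 + ((q - z.2)/t)^2)⁻¹))) := by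
    rw [MeasureTheory.Measure.volume_eq_prod]
    exact ((wg_int p t ht).mul_prod (wg_int q t ht)).const_mul _
  have step : convTheta F p q t ≤
      ∫ z : ℝ × ℝ, (2 * B^2) * ((t⁻¹ * (1 + ((p - z.1)/t)^2)⁻¹) *
        (t⁻¹ * (1 + ((q - z.2)/t)^2)⁻¹)) := by
    refine integral_mono_of_nonneg (ae_of_all _ fun z => mul_nonneg (sq_nonneg _)
      (mul_nonneg (by positivity) (theta_nonneg _))) hmaj
      (ae_of_all _ fun z => point_bound F B hb p q t ht z)
  refine step.trans (le_of_eq ?_)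
  rw [integral_const_mul, MeasureTheory.Measure.volume_eq_prod,
    integral_prod_mul (f := fun x : ℝ => t⁻¹ * (1 + ((p - x)/t)^2)⁻¹)
      (g := fun y : ℝ => t⁻¹ * (1 + ((q - y)/t)^2)⁻¹),
    wg_integral p t ht, wg_integral q t ht]
  ring

lemma sqrt_convTheta_le_Msize (F : ℝ × ℝ → ℝ) (B : ℝ) (hm : Measurable F)
    (hb : ∀ z, |F z| ≤ B) (C : Set (ℤ × ℤ × ℤ)) {p q t : ℝ} (hw : ((p, q), t) ∈ Omega C) :
    Real.sqrt (convTheta F p q t) ≤ Msize F C := by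
  have hbdd : BddAbove (range fun w : Omega C =>
      Real.sqrt (convTheta F w.1.1.1 w.1.1.2 w.1.2)) := by
    refine ⟨Real.sqrt (2 * B^2 * (∫ x : ℝ, (1 + x^2)⁻¹) ^ 2), ?_⟩
    rintro s ⟨w, rfl⟩
    exact Real.sqrt_le_sqrt (convTheta_le F B hm hb _ _ _ (omega_t_pos w.2))
  exact le_ciSup hbdd (⟨((p, q), t), hw⟩ : Omega C)

lemma S_le_convTheta (F : ℝ × ℝ → ℝ) (B : ℝ) (hm : Measurable F) (hb : ∀ z, |F z| ≤ B)
    (p q t : ℝ) (ht : 0 < t) :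
    (∫ z : ℝ × ℝ, qfun F (wt t p) (wt t q) z) ≤ convTheta F p q t := by
  unfold convTheta
  refine integral_mono_of_nonneg (ae_of_all _ fun z => mul_nonneg (sq_nonneg _)
    (mul_nonneg (wt_nonneg t p z.1 ht) (wt_nonneg t q z.2 ht)))
    (convTheta_integrand_int F B hm hb p q t ht) (ae_of_all _ fun z => ?_)
  show F z ^ 2 * wpair (wt t p) (wt t q) z ≤ _
  exact mul_le_mul_of_nonneg_left (wt_mul_wt_le t p q z.1 z.2 ht) (sq_nonneg _)

/-- Lemma 2.2: the Gowers box-type bound for the entangled convolution with `ϑ⊗ϑ⊗ϑ⊗ϑ`. -/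
theorem entConv_le_Msize (F1 F2 F3 F4 : ℝ × ℝ → ℝ)
    (h1 : Nice F1) (h2 : Nice F2) (h3 : Nice F3) (h4 : Nice F4)
    (C : Set (ℤ × ℤ × ℤ)) (p q t : ℝ) (hw : ((p, q), t) ∈ Omega C) :
    entConv F1 F2 F3 F4 vth vth vth vth t p q ≤
      Msize F1 C * Msize F2 C * Msize F3 C * Msize F4 C := by
  have ht : 0 < t := omega_t_pos hw
  obtain ⟨m1, ⟨B1, hB1⟩, -, n1⟩ := h1
  obtain ⟨m2, ⟨B2, hB2⟩, -, n2⟩ := h2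
  obtain ⟨m3, ⟨B3, hB3⟩, -, n3⟩ := h3
  obtain ⟨m4, ⟨B4, hB4⟩, -, n4⟩ := h4
  have hF1le : ∀ z, F1 z ≤ B1 := fun z => (le_abs_self _).trans (hB1 z)
  have hF2le : ∀ z, F2 z ≤ B2 := fun z => (le_abs_self _).trans (hB2 z)
  have hF3le : ∀ z, F3 z ≤ B3 := fun z => (le_abs_self _).trans (hB3 z)
  have hF4le : ∀ z, F4 z ≤ B4 := fun z => (le_abs_self _).trans (hB4 z)
  have key := core F1 F2 F3 F4 B1 B2 B3 B4 (wt t p) (wt t q) m1 m2 m3 m4 n1 n2 n3 n4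
    hF1le hF2le hF3le hF4le (wt_meas t p) (wt_meas t q)
    (fun x => wt_nonneg t p x ht) (fun x => wt_nonneg t q x ht)
    (wt_int t p ht) (wt_int t q ht)
  have e : entConv F1 F2 F3 F4 vth vth vth vth t p q =
      ∫ x : ℝ, ∫ y : ℝ, ∫ x' : ℝ, ∫ y' : ℝ,
        Gfun F1 F2 F3 F4 (wt t p) (wt t q) ((x, y), (x', y')) := by
    unfold entConv
    refine integral_congr_ae (ae_of_all _ fun x => ?_)
    refine integral_congr_ae (ae_of_all _ fun y => ?_)
    refine integral_congr_ae (ae_of_all _ fun x' => ?_)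
    refine integral_congr_ae (ae_of_all _ fun y' => ?_)
    simp only [Gfun, wpair, wt]
    ring
  rw [e]
  refine key.trans ?_
  have i1 : Real.sqrt (∫ z : ℝ × ℝ, qfun F1 (wt t p) (wt t q) z) ≤ Msize F1 C :=
    (Real.sqrt_le_sqrt (S_le_convTheta F1 B1 m1 hB1 p q t ht)).trans
      (sqrt_convTheta_le_Msize F1 B1 m1 hB1 C hw)
  have i2 : Real.sqrt (∫ z : ℝ × ℝ, qfun F2 (wt t p) (wt t q) z) ≤ Msize F2 C :=
    (Real.sqrt_le_sqrt (S_le_convTheta F2 B2 m2 hB2 p q t ht)).trans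
      (sqrt_convTheta_le_Msize F2 B2 m2 hB2 C hw)
  have i3 : Real.sqrt (∫ z : ℝ × ℝ, qfun F3 (wt t p) (wt t q) z) ≤ Msize F3 C :=
    (Real.sqrt_le_sqrt (S_le_convTheta F3 B3 m3 hB3 p q t ht)).trans
      (sqrt_convTheta_le_Msize F3 B3 m3 hB3 C hw)
  have i4 : Real.sqrt (∫ z : ℝ × ℝ, qfun F4 (wt t p) (wt t q) z) ≤ Msize F4 C :=
    (Real.sqrt_le_sqrt (S_le_convTheta F4 B4 m4 hB4 p q t ht)).trans
      (sqrt_convTheta_le_Msize F4 B4 m4 hB4 C hw)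
  have hM1 : 0 ≤ Msize F1 C :=
    (Real.sqrt_nonneg _).trans (sqrt_convTheta_le_Msize F1 B1 m1 hB1 C hw)
  have hM2 : 0 ≤ Msize F2 C :=
    (Real.sqrt_nonneg _).trans (sqrt_convTheta_le_Msize F2 B2 m2 hB2 C hw)
  have hM3 : 0 ≤ Msize F3 C :=
    (Real.sqrt_nonneg _).trans (sqrt_convTheta_le_Msize F3 B3 m3 hB3 C hw)
  exact le_trans
    (mul_le_mul (mul_le_mul i1 i2 (Real.sqrt_nonneg _) hM1)
      (mul_le_mul i3 i4 (Real.sqrt_nonneg _) hM3)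
      (mul_nonneg (Real.sqrt_nonneg _) (Real.sqrt_nonneg _)) (mul_nonneg hM1 hM2))
    (le_of_eq (by ring))

end
end

section
/- Let ρ, σ be real-valued Schwartz functions on ℝ satisfying −t ∂_t |ρ̂(tτ)|² = |σ̂(tτ)|² for all t > 0 and all τ ∈ ℝ. Then for all t > 0 and all x, x' ∈ ℝ, −t ∂_t ∫_ℝ [ρ]_t(p−x) [ρ]_t(p−x') dp = ∫_ℝ [σ]_t(p−x) [σ]_t(p−x') dp. -/
open MeasureTheory
open scoped FourierTransform

noncomputable section

namespace DilCorrAux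

open Complex SchwartzMap Real
open scoped ComplexConjugate Topology


/-- A real Schwartz function, as a complex-valued Schwartz function. -/
def ofRealS (ρ : SchwartzMap ℝ ℝ) : SchwartzMap ℝ ℂ where
  toFun x := (ρ x : ℂ)
  smooth' := Complex.ofRealCLM.contDiff.comp (ρ.smooth ⊤)
  decay' := by
    intro k n
    obtain ⟨C, hC⟩ := ρ.decay' k n
    refine ⟨C, fun x => ?_⟩
    have h := Complex.ofRealLI.norm_iteratedFDeriv_comp_left (i := n) (x := x) (ρ.smooth ⊤).contDiffAt
      (by exact_mod_cast le_top)
    have e : (fun y => ((ρ y : ℂ))) = (Complex.ofRealLI ∘ ρ) := rfl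
    rw [e, h]
    exact hC x

@[simp] lemma ofRealS_apply (ρ : SchwartzMap ℝ ℝ) (x : ℝ) : ofRealS ρ x = (ρ x : ℂ) := rfl

lemma fourier_conj (u : ℝ → ℂ) (ξ : ℝ) :
    𝓕 (fun x => conj (u x)) ξ = conj (𝓕 u (-ξ)) := by
  rw [Real.fourier_real_eq_integral_exp_smul,
    Real.fourier_real_eq_integral_exp_smul, ← integral_conj]
  congr 1
  ext v
  simp only [smul_eq_mul, map_mul, ← Complex.exp_conj, Complex.conj_I, Complex.conj_ofReal]
  have e : ((↑(-2 * π * v * -ξ) : ℂ)) * -I = ↑(-2 * π * v * ξ) * I := by push_cast; ring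
  rw [e, mul_comm]

lemma mult_formula {f g : ℝ → ℂ} (hf : Integrable f) (hg : Integrable g) :
    ∫ ξ : ℝ, 𝓕 f ξ * g ξ = ∫ x : ℝ, f x * 𝓕 g x := by
  have hL : Continuous fun p : ℝ × ℝ => (innerₗ ℝ) p.1 p.2 := by
    simp [RCLike.inner_apply]
    exact (continuous_snd.mul continuous_fst : Continuous fun p : ℝ × ℝ => p.2 * p.1)
  have hflip : (innerₗ ℝ).flip = innerₗ ℝ := by
    apply LinearMap.ext; intro x; apply LinearMap.ext; intro y
    exact real_inner_comm x y
  have := VectorFourier.integral_bilin_fourierIntegral_eq_flip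
    (ContinuousLinearMap.mul ℂ ℂ) Real.continuous_fourierChar hL hf hg
  rw [hflip] at this
  exact this

lemma integrable_conj {f : ℝ → ℂ} (hf : Integrable f) :
    Integrable fun x => conj (f x) := by
  refine ⟨Complex.continuous_conj.comp_aestronglyMeasurable hf.1, ?_⟩
  simpa [HasFiniteIntegral, RCLike.nnnorm_conj] using hf.2

lemma parseval {f g : ℝ → ℂ} (hf : Integrable f) (hgc : Continuous g)
    (hg : Integrable g) (hg' : Integrable (𝓕 g)) :
    ∫ ξ : ℝ, 𝓕 f ξ * conj (𝓕 g ξ) = ∫ x : ℝ, f x * conj (g x) := by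
  have hconj : Integrable (fun ξ => conj (𝓕 g ξ)) := integrable_conj hg'
  have key : ∀ x : ℝ, 𝓕 (fun ξ => conj (𝓕 g ξ)) x = conj (g x) := by
    intro x
    rw [fourier_conj, ← Real.fourierInv_eq_fourier_neg,
      hg.fourierInv_fourier_eq hg' hgc.continuousAt]
  calc ∫ ξ : ℝ, 𝓕 f ξ * conj (𝓕 g ξ)
      = ∫ x : ℝ, f x * 𝓕 (fun ξ => conj (𝓕 g ξ)) x := mult_formula hf hconj
    _ = ∫ x : ℝ, f x * conj (g x) := by simp only [key]

lemma fourier_dilate (u : ℝ → ℂ) {s : ℝ} (hs : 0 < s) (a τ : ℝ) :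
    𝓕 (fun p => (s⁻¹ : ℂ) * u ((p - a)/s)) τ
      = Complex.exp (↑(-2*π*a*τ) * Complex.I) * 𝓕 u (s*τ) := by
  rw [Real.fourier_real_eq_integral_exp_smul,
    Real.fourier_real_eq_integral_exp_smul]
  have h1 : (∫ v : ℝ, Complex.exp (↑(-2*π*v*τ) * Complex.I) • ((s⁻¹:ℂ) * u ((v - a)/s)))
      = ∫ v : ℝ, Complex.exp (↑(-2*π*(v+a)*τ) * Complex.I) • ((s⁻¹:ℂ) * u (v/s)) := by
    rw [← integral_add_right_eq_self
      (fun v : ℝ => Complex.exp (↑(-2*π*v*τ) * Complex.I) • ((s⁻¹:ℂ) * u ((v - a)/s))) a]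
    simp only [add_sub_cancel_right]
  rw [h1]
  have h2 : (∫ v : ℝ, Complex.exp (↑(-2*π*(v+a)*τ) * Complex.I) • ((s⁻¹:ℂ) * u (v/s)))
      = |s| • ∫ w : ℝ, Complex.exp (↑(-2*π*(s*w+a)*τ) * Complex.I) • ((s⁻¹:ℂ) * u w) := by
    rw [← MeasureTheory.Measure.integral_comp_div
      (fun w : ℝ => Complex.exp (↑(-2*π*(s*w+a)*τ) * Complex.I) • ((s⁻¹:ℂ) * u w)) s]
    congr 1
    ext v
    have hv : s * (v / s) = v := by field_simp
    rw [hv]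
  rw [h2]
  have h3 : ∀ w : ℝ, Complex.exp (↑(-2*π*(s*w+a)*τ) * Complex.I) • ((s⁻¹:ℂ) * u w)
      = (Complex.exp (↑(-2*π*a*τ) * Complex.I) * (s⁻¹:ℂ))
        * (Complex.exp (↑(-2*π*w*(s*τ)) * Complex.I) * u w) := by
    intro w
    have e : (↑(-2*π*(s*w+a)*τ) : ℂ) * Complex.I
        = ↑(-2*π*a*τ) * Complex.I + ↑(-2*π*w*(s*τ)) * Complex.I := by
      push_cast; ring
    rw [smul_eq_mul, e, Complex.exp_add]
    ring
  simp only [h3]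
  rw [MeasureTheory.integral_const_mul, abs_of_pos hs, Complex.real_smul]
  have hsne : (s:ℂ) ≠ 0 := Complex.ofReal_ne_zero.2 hs.ne'
  simp only [smul_eq_mul]
  field_simp
  congr 1
  ext w
  ring_nf

lemma integrable_dilate (ρ : SchwartzMap ℝ ℝ) {s : ℝ} (hs : 0 < s) (a : ℝ) :
    Integrable (fun p : ℝ => (s⁻¹ : ℂ) * ((ρ ((p - a)/s) : ℝ) : ℂ)) := by
  have h0 : Integrable (fun y : ℝ => ((ρ y : ℝ) : ℂ)) := (ρ.integrable (μ := volume)).ofReal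
  have h1 : Integrable (fun q : ℝ => ((ρ (q / s) : ℝ) : ℂ)) := h0.comp_div hs.ne'
  have h2 : Integrable (fun p : ℝ => ((ρ ((p - a) / s) : ℝ) : ℂ)) := h1.comp_sub_right a
  exact h2.const_mul _

lemma continuous_dilate (ρ : SchwartzMap ℝ ℝ) {s : ℝ} (hs : 0 < s) (a : ℝ) :
    Continuous (fun p : ℝ => (s⁻¹ : ℂ) * ((ρ ((p - a)/s) : ℝ) : ℂ)) := by
  apply continuous_const.mul
  exact Complex.continuous_ofReal.comp (ρ.continuous.comp (by continuity))

lemma integrable_comp_fourier (ρ : SchwartzMap ℝ ℝ) {s : ℝ} (hs : 0 < s) :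
    Integrable (fun τ : ℝ => 𝓕 (fun y : ℝ => ((ρ y : ℝ) : ℂ)) (s * τ)) := by
  have : Integrable (fun τ : ℝ => (fourierTransformCLM ℝ (ofRealS ρ)) (s * τ)) :=
    ((fourierTransformCLM ℝ (ofRealS ρ)).integrable (μ := volume)).comp_mul_left' hs.ne'
  exact this

lemma integrable_fourier_dilate (ρ : SchwartzMap ℝ ℝ) {s : ℝ} (hs : 0 < s) (a : ℝ) :
    Integrable (𝓕 (fun p : ℝ => (s⁻¹ : ℂ) * ((ρ ((p - a)/s) : ℝ) : ℂ))) := by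
  have key : ∀ τ : ℝ, 𝓕 (fun p : ℝ => (s⁻¹ : ℂ) * ((ρ ((p - a)/s) : ℝ) : ℂ)) τ
      = Complex.exp (↑(-2*π*a*τ) * Complex.I) * 𝓕 (fun y : ℝ => ((ρ y : ℝ) : ℂ)) (s*τ) :=
    fun τ => fourier_dilate (fun y : ℝ => ((ρ y : ℝ) : ℂ)) hs a τ
  rw [show (𝓕 (fun p : ℝ => (s⁻¹ : ℂ) * ((ρ ((p - a)/s) : ℝ) : ℂ)))
      = fun τ : ℝ => Complex.exp (↑(-2*π*a*τ) * Complex.I)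
        * 𝓕 (fun y : ℝ => ((ρ y : ℝ) : ℂ)) (s*τ) from funext key]
  refine (integrable_comp_fourier ρ hs).norm.mono' ?_ ?_
  · apply Continuous.aestronglyMeasurable
    apply Continuous.mul
    · apply Continuous.cexp
      exact (Complex.continuous_ofReal.comp (by continuity)).mul continuous_const
    · exact ((fourierTransformCLM ℝ (ofRealS ρ)).continuous).comp
        (continuous_const.mul continuous_id)
  · filter_upwards with τ
    rw [norm_mul, Complex.norm_exp_ofReal_mul_I, one_mul]

lemma sq_norm_integrand_eq (ρ : SchwartzMap ℝ ℝ) {s : ℝ} (hs : 0 < s) (x x' τ : ℝ) :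
    𝓕 (fun p : ℝ => (s⁻¹ : ℂ) * ((ρ ((p - x)/s) : ℝ) : ℂ)) τ
      * conj (𝓕 (fun p : ℝ => (s⁻¹ : ℂ) * ((ρ ((p - x')/s) : ℝ) : ℂ)) τ)
    = ((‖𝓕 (fun y : ℝ => ((ρ y : ℝ) : ℂ)) (s*τ)‖^2 : ℝ) : ℂ)
        * Complex.exp (↑(-(2*π*(x - x')*τ)) * Complex.I) := by
  set R := 𝓕 (fun y : ℝ => ((ρ y : ℝ) : ℂ)) (s*τ) with hR
  rw [fourier_dilate (fun y : ℝ => ((ρ y : ℝ) : ℂ)) hs x τ,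
    fourier_dilate (fun y : ℝ => ((ρ y : ℝ) : ℂ)) hs x' τ, map_mul]
  have h2 : Complex.exp (↑(-2*π*x*τ) * Complex.I) * R
      * (conj (Complex.exp (↑(-2*π*x'*τ) * Complex.I)) * conj R)
      = (Complex.exp (↑(-2*π*x*τ) * Complex.I) * conj (Complex.exp (↑(-2*π*x'*τ) * Complex.I)))
        * (R * conj R) := by ring
  rw [h2, Complex.mul_conj, Complex.normSq_eq_norm_sq]
  have h4 : Complex.exp (↑(-2*π*x*τ) * Complex.I)
      * conj (Complex.exp (↑(-2*π*x'*τ) * Complex.I))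
      = Complex.exp (↑(-(2*π*(x - x')*τ)) * Complex.I) := by
    rw [← Complex.exp_conj, map_mul, Complex.conj_I, Complex.conj_ofReal, ← Complex.exp_add]
    congr 1
    push_cast
    ring
  rw [h4]
  push_cast
  ring

lemma corr_formula (ρ : SchwartzMap ℝ ℝ) {s : ℝ} (hs : 0 < s) (x x' : ℝ) :
    ∫ p : ℝ, (s⁻¹ * ρ ((p - x)/s)) * (s⁻¹ * ρ ((p - x')/s))
      = ∫ τ : ℝ, ‖𝓕 (fun y : ℝ => ((ρ y : ℝ) : ℂ)) (s*τ)‖^2 * Real.cos (2*π*(x - x')*τ) := by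
  set f := fun p : ℝ => (s⁻¹ : ℂ) * ((ρ ((p - x)/s) : ℝ) : ℂ) with hf
  set g := fun p : ℝ => (s⁻¹ : ℂ) * ((ρ ((p - x')/s) : ℝ) : ℂ) with hg
  -- Step 1 : the complex version of the LHS
  have step1 : ((∫ p : ℝ, (s⁻¹ * ρ ((p - x)/s)) * (s⁻¹ * ρ ((p - x')/s)) : ℝ) : ℂ)
      = ∫ p : ℝ, f p * conj (g p) := by
    have e1 : ((∫ p : ℝ, (s⁻¹ * ρ ((p - x)/s)) * (s⁻¹ * ρ ((p - x')/s)) : ℝ) : ℂ)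
        = ∫ p : ℝ, (((s⁻¹ * ρ ((p - x)/s)) * (s⁻¹ * ρ ((p - x')/s)) : ℝ) : ℂ) :=
      (integral_ofReal (𝕜 := ℂ)).symm
    rw [e1]
    congr 1
    funext p
    simp only [hf, hg, map_mul, map_inv₀, Complex.conj_ofReal]
    push_cast
    ring
  -- Step 2 : Parseval
  have step2 : (∫ ξ : ℝ, 𝓕 f ξ * conj (𝓕 g ξ)) = ∫ p : ℝ, f p * conj (g p) :=
    parseval (integrable_dilate ρ hs x) (continuous_dilate ρ hs x')
      (integrable_dilate ρ hs x') (integrable_fourier_dilate ρ hs x')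
  -- Step 3 : identify the Fourier-side integrand
  have step3 : (∫ ξ : ℝ, 𝓕 f ξ * conj (𝓕 g ξ))
      = ∫ τ : ℝ, ((‖𝓕 (fun y : ℝ => ((ρ y : ℝ) : ℂ)) (s*τ)‖^2 : ℝ) : ℂ)
          * Complex.exp (↑(-(2*π*(x - x')*τ)) * Complex.I) := by
    congr 1
    funext τ
    exact sq_norm_integrand_eq ρ hs x x' τ
  -- integrability of the Fourier-side integrand
  have hint : Integrable (fun τ : ℝ =>
      ((‖𝓕 (fun y : ℝ => ((ρ y : ℝ) : ℂ)) (s*τ)‖^2 : ℝ) : ℂ)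
        * Complex.exp (↑(-(2*π*(x - x')*τ)) * Complex.I)) := by
    obtain ⟨M, hM0, hM⟩ := (fourierTransformCLM ℝ (ofRealS ρ)).decay 0 0
    refine ((integrable_comp_fourier ρ hs).norm.const_mul M).mono' ?_ ?_
    · apply Continuous.aestronglyMeasurable
      apply Continuous.mul
      · apply Continuous.comp Complex.continuous_ofReal
        apply Continuous.pow
        apply Continuous.norm
        exact ((fourierTransformCLM ℝ (ofRealS ρ)).continuous).comp
          (continuous_const.mul continuous_id)
      · apply Continuous.cexp
        exact (Complex.continuous_ofReal.comp (by continuity)).mul continuous_const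
    · filter_upwards with τ
      have hMτ : ‖𝓕 (fun y : ℝ => ((ρ y : ℝ) : ℂ)) (s*τ)‖ ≤ M := by
        have h0 := hM (s*τ)
        simp only [norm_iteratedFDeriv_zero, pow_zero, one_mul] at h0
        exact h0
      rw [norm_mul, Complex.norm_exp_ofReal_mul_I, mul_one, Complex.norm_real,
        Real.norm_of_nonneg (by positivity), pow_two]
      exact mul_le_mul_of_nonneg_right hMτ (norm_nonneg _)
  -- Step 4 : take real parts
  have step4 := integral_re (𝕜 := ℂ) hint
  simp only [RCLike.re_to_complex] at step4
  have step5 : ∀ τ : ℝ, (((‖𝓕 (fun y : ℝ => ((ρ y : ℝ) : ℂ)) (s*τ)‖^2 : ℝ) : ℂ)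
      * Complex.exp (↑(-(2*π*(x - x')*τ)) * Complex.I)).re
      = ‖𝓕 (fun y : ℝ => ((ρ y : ℝ) : ℂ)) (s*τ)‖^2 * Real.cos (2*π*(x - x')*τ) := by
    intro τ
    rw [Complex.mul_re, Complex.ofReal_re, Complex.ofReal_im, Complex.exp_ofReal_mul_I_re,
      zero_mul, sub_zero, Real.cos_neg]
  calc ∫ p : ℝ, (s⁻¹ * ρ ((p - x)/s)) * (s⁻¹ * ρ ((p - x')/s))
      = (((∫ p : ℝ, (s⁻¹ * ρ ((p - x)/s)) * (s⁻¹ * ρ ((p - x')/s)) : ℝ)) : ℂ).re :=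
        (Complex.ofReal_re _).symm
    _ = (∫ p : ℝ, f p * conj (g p)).re := by rw [step1]
    _ = (∫ ξ : ℝ, 𝓕 f ξ * conj (𝓕 g ξ)).re := by rw [step2]
    _ = (∫ τ : ℝ, ((‖𝓕 (fun y : ℝ => ((ρ y : ℝ) : ℂ)) (s*τ)‖^2 : ℝ) : ℂ)
          * Complex.exp (↑(-(2*π*(x - x')*τ)) * Complex.I)).re := by rw [step3]
    _ = ∫ τ : ℝ, (((‖𝓕 (fun y : ℝ => ((ρ y : ℝ) : ℂ)) (s*τ)‖^2 : ℝ) : ℂ)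
          * Complex.exp (↑(-(2*π*(x - x')*τ)) * Complex.I)).re := step4.symm
    _ = ∫ τ : ℝ, ‖𝓕 (fun y : ℝ => ((ρ y : ℝ) : ℂ)) (s*τ)‖^2 * Real.cos (2*π*(x - x')*τ) := by
        simp only [step5]

lemma sq_norm_fourier_le (ρ : SchwartzMap ℝ ℝ) :
    ∃ B : ℝ, 0 ≤ B ∧ ∀ u : ℝ,
      ‖𝓕 (fun y : ℝ => ((ρ y : ℝ) : ℂ)) u‖^2 ≤ B * (1 + u^2)⁻¹ := by
  obtain ⟨C, hC0, hC⟩ := (fourierTransformCLM ℝ (ofRealS ρ)).decay 0 0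
  obtain ⟨D, hD0, hD⟩ := (fourierTransformCLM ℝ (ofRealS ρ)).decay 2 0
  refine ⟨C * (C + D), by positivity, fun u => ?_⟩
  have hCu : ‖𝓕 (fun y : ℝ => ((ρ y : ℝ) : ℂ)) u‖ ≤ C := by
    have h0 := hC u
    simp only [norm_iteratedFDeriv_zero, pow_zero, one_mul] at h0
    exact h0
  have hDu : |u|^2 * ‖𝓕 (fun y : ℝ => ((ρ y : ℝ) : ℂ)) u‖ ≤ D := by
    have h0 := hD u
    simp only [norm_iteratedFDeriv_zero, Real.norm_eq_abs] at h0
    exact h0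
  have pos : (0:ℝ) < 1 + u^2 := by positivity
  have h1 : (1 + u^2) * ‖𝓕 (fun y : ℝ => ((ρ y : ℝ) : ℂ)) u‖ ≤ C + D := by
    nlinarith [norm_nonneg (𝓕 (fun y : ℝ => ((ρ y : ℝ) : ℂ)) u), _root_.sq_abs u]
  have h2 : ‖𝓕 (fun y : ℝ => ((ρ y : ℝ) : ℂ)) u‖ ≤ (C + D) * (1 + u^2)⁻¹ := by
    rw [← div_eq_mul_inv, le_div_iff₀ pos]
    linarith [h1]
  calc ‖𝓕 (fun y : ℝ => ((ρ y : ℝ) : ℂ)) u‖^2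
      = ‖𝓕 (fun y : ℝ => ((ρ y : ℝ) : ℂ)) u‖ * ‖𝓕 (fun y : ℝ => ((ρ y : ℝ) : ℂ)) u‖ := sq _
    _ ≤ C * ((C + D) * (1 + u^2)⁻¹) :=
        mul_le_mul hCu h2 (norm_nonneg _) hC0.le
    _ = C * (C + D) * (1 + u^2)⁻¹ := by ring

lemma continuous_sq_norm_fourier (ρ : SchwartzMap ℝ ℝ) (c : ℝ) :
    Continuous fun τ : ℝ => ‖𝓕 (fun y : ℝ => ((ρ y : ℝ) : ℂ)) (c * τ)‖^2 := by
  have : Continuous fun τ : ℝ => (fourierTransformCLM ℝ (ofRealS ρ)) (c * τ) :=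
    (fourierTransformCLM ℝ (ofRealS ρ)).continuous.comp (continuous_const.mul continuous_id)
  exact (this.norm.pow 2)

lemma integrable_inv_one_add_sq_comp {c : ℝ} (hc : c ≠ 0) :
    Integrable fun τ : ℝ => (1 + (c * τ)^2)⁻¹ := by
  have := (integrable_inv_one_add_sq).comp_mul_left' (R := c) hc
  simpa using this

end DilCorrAux

open DilCorrAux Real in

/-- If `-t ∂_t |ρ̂(tτ)|² = |σ̂(tτ)|²` for all `t > 0`, `τ ∈ ℝ`, then
`-t ∂_t ∫ [ρ]_t(p-x) [ρ]_t(p-x') dp = ∫ [σ]_t(p-x) [σ]_t(p-x') dp`. -/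
theorem deriv_dilated_correlation (ρ σ : SchwartzMap ℝ ℝ)
    (h : ∀ (τ t : ℝ), 0 < t →
      HasDerivAt (fun s : ℝ => ‖𝓕 (fun x => (ρ x : ℂ)) (s * τ)‖^2)
        (-(‖𝓕 (fun x => (σ x : ℂ)) (t * τ)‖^2) / t) t)
    (t : ℝ) (ht : 0 < t) (x x' : ℝ) :
    HasDerivAt (fun s : ℝ => ∫ p : ℝ, (s⁻¹ * ρ ((p - x)/s)) * (s⁻¹ * ρ ((p - x')/s)))
      (-(∫ p : ℝ, (t⁻¹ * σ ((p - x)/t)) * (t⁻¹ * σ ((p - x')/t))) / t) t := by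
  obtain ⟨B, hB0, hB⟩ := sq_norm_fourier_le σ
  obtain ⟨A, hA0, hA⟩ := sq_norm_fourier_le ρ
  have ht2 : (0:ℝ) < t/2 := by positivity
  set F : ℝ → ℝ → ℝ := fun s τ =>
    ‖𝓕 (fun y : ℝ => ((ρ y : ℝ) : ℂ)) (s*τ)‖^2 * Real.cos (2*π*(x - x')*τ) with hFdef
  set F' : ℝ → ℝ → ℝ := fun s τ =>
    (-(‖𝓕 (fun y : ℝ => ((σ y : ℝ) : ℂ)) (s*τ)‖^2) / s) * Real.cos (2*π*(x - x')*τ) with hF'def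
  have hball : ∀ s ∈ Metric.ball t (t/2), 0 < s := by
    intro s hs
    have hd := Metric.mem_ball.1 hs
    rw [Real.dist_eq] at hd
    have := abs_lt.1 hd
    linarith [this.1]
  have hball' : ∀ s ∈ Metric.ball t (t/2), t/2 < s := by
    intro s hs
    have hd := Metric.mem_ball.1 hs
    rw [Real.dist_eq] at hd
    have := abs_lt.1 hd
    linarith [this.1]
  have hcos : Continuous fun τ : ℝ => Real.cos (2*π*(x - x')*τ) :=
    Real.continuous_cos.comp (continuous_const.mul continuous_id)
  have hmeas : ∀ s : ℝ, AEStronglyMeasurable (F s) volume := fun s =>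
    ((continuous_sq_norm_fourier ρ s).mul hcos).aestronglyMeasurable
  have hFint : Integrable (F t) := by
    refine ((integrable_inv_one_add_sq_comp ht.ne').const_mul A).mono' (hmeas t) ?_
    filter_upwards with τ
    have h1 := hA (t*τ)
    have h2 : |Real.cos (2*π*(x - x')*τ)| ≤ 1 := Real.abs_cos_le_one _
    have h3 : (0:ℝ) ≤ ‖𝓕 (fun y : ℝ => ((ρ y : ℝ) : ℂ)) (t*τ)‖^2 := by positivity
    rw [hFdef, Real.norm_eq_abs, abs_mul]
    calc |‖𝓕 (fun y : ℝ => ((ρ y : ℝ) : ℂ)) (t*τ)‖^2| * |Real.cos (2*π*(x - x')*τ)|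
        ≤ |‖𝓕 (fun y : ℝ => ((ρ y : ℝ) : ℂ)) (t*τ)‖^2| * 1 :=
          mul_le_mul_of_nonneg_left h2 (abs_nonneg _)
      _ = ‖𝓕 (fun y : ℝ => ((ρ y : ℝ) : ℂ)) (t*τ)‖^2 := by rw [mul_one, _root_.abs_of_nonneg h3]
      _ ≤ A * (1 + (t*τ)^2)⁻¹ := h1
  have hF'meas : AEStronglyMeasurable (F' t) volume := by
    apply Continuous.aestronglyMeasurable
    exact ((continuous_sq_norm_fourier σ t).neg.div_const t).mul hcos
  have hbound : ∀ᵐ τ : ℝ ∂volume, ∀ s ∈ Metric.ball t (t/2),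
      ‖F' s τ‖ ≤ (2/t) * (B * (1 + ((t/2) * τ)^2)⁻¹) := by
    filter_upwards with τ s hs
    have hst : t/2 < s := hball' s hs
    have hs0 : 0 < s := hball s hs
    have hmono : (1 + (s*τ)^2)⁻¹ ≤ (1 + ((t/2)*τ)^2)⁻¹ := by
      apply inv_anti₀ (by positivity)
      have hsq : ((t/2)*τ)^2 ≤ (s*τ)^2 := by
        rw [mul_pow, mul_pow]
        apply mul_le_mul_of_nonneg_right _ (sq_nonneg τ)
        nlinarith
      linarith
    have h1 := hB (s*τ)
    have h2 : |Real.cos (2*π*(x - x')*τ)| ≤ 1 := Real.abs_cos_le_one _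
    have h3 : (0:ℝ) ≤ ‖𝓕 (fun y : ℝ => ((σ y : ℝ) : ℂ)) (s*τ)‖^2 := by positivity
    rw [hF'def, Real.norm_eq_abs, abs_mul, abs_div, abs_neg, _root_.abs_of_nonneg h3, _root_.abs_of_pos hs0]
    calc ‖𝓕 (fun y : ℝ => ((σ y : ℝ) : ℂ)) (s*τ)‖^2 / s * |Real.cos (2*π*(x - x')*τ)|
        ≤ ‖𝓕 (fun y : ℝ => ((σ y : ℝ) : ℂ)) (s*τ)‖^2 / s * 1 :=
          mul_le_mul_of_nonneg_left h2 (by positivity)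
      _ = ‖𝓕 (fun y : ℝ => ((σ y : ℝ) : ℂ)) (s*τ)‖^2 / s := mul_one _
      _ ≤ (B * (1 + ((t/2)*τ)^2)⁻¹) / (t/2) := by
          apply div_le_div₀ (by positivity)
            (h1.trans (mul_le_mul_of_nonneg_left hmono hB0)) ht2 hst.le
      _ = (2/t) * (B * (1 + ((t/2)*τ)^2)⁻¹) := by
          field_simp
  have hbound_int : Integrable fun τ : ℝ => (2/t) * (B * (1 + ((t/2) * τ)^2)⁻¹) :=
    (((integrable_inv_one_add_sq_comp ht2.ne').const_mul B).const_mul (2/t))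
  have hdiff : ∀ᵐ τ : ℝ ∂volume, ∀ s ∈ Metric.ball t (t/2),
      HasDerivAt (F · τ) (F' s τ) s := by
    filter_upwards with τ s hs
    exact (h τ s (hball s hs)).mul_const _
  obtain ⟨-, hmain⟩ := hasDerivAt_integral_of_dominated_loc_of_deriv_le (Metric.ball_mem_nhds t ht2)
    (Filter.Eventually.of_forall hmeas) hFint hF'meas hbound hbound_int hdiff
  have heq : (fun s : ℝ => ∫ p : ℝ, (s⁻¹ * ρ ((p - x)/s)) * (s⁻¹ * ρ ((p - x')/s)))
      =ᶠ[nhds t] fun s => ∫ τ : ℝ, F s τ := by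
    filter_upwards [eventually_gt_nhds ht] with s hs0
    exact corr_formula ρ hs0 x x'
  have hval : (∫ τ : ℝ, F' t τ)
      = -(∫ p : ℝ, (t⁻¹ * σ ((p - x)/t)) * (t⁻¹ * σ ((p - x')/t))) / t := by
    have e : ∀ τ : ℝ, F' t τ = (-(1:ℝ)/t)
        * (‖𝓕 (fun y : ℝ => ((σ y : ℝ) : ℂ)) (t*τ)‖^2 * Real.cos (2*π*(x - x')*τ)) := by
      intro τ
      rw [hF'def]
      ring
    rw [show (fun τ : ℝ => F' t τ) = fun τ : ℝ => (-(1:ℝ)/t)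
        * (‖𝓕 (fun y : ℝ => ((σ y : ℝ) : ℂ)) (t*τ)‖^2 * Real.cos (2*π*(x - x')*τ)) from funext e]
    rw [MeasureTheory.integral_const_mul, ← corr_formula σ ht x x']
    ring
  rw [← hval]
  exact hmain.congr_of_eventuallyEq heq


end
end

section
/- Let g_α(x) := (√π · α)^{-1} e^{-(x/α)²} for α > 0 and h_γ(x) := γ · g_γ'(x) for γ > 0. Then for every α, γ > 0, every finite collection 𝒞 of dyadic squares, and every bounded, real-valued, measurable function F on ℝ² with finite measure support, Θ^𝒞_{g_α, h_γ}(F,F,F,F) ≥ 0. -/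
open MeasureTheory Set

noncomputable section

/-- The `L¹`-normalized Gaussian rescaled by `α > 0`. -/
def gauss (α : ℝ) (x : ℝ) : ℝ := (Real.sqrt Real.pi * α)⁻¹ * Real.exp (-(x/α)^2)

/-- `h_γ = γ (g_γ)'`. -/
def hGauss (γ : ℝ) (x : ℝ) : ℝ := γ * deriv (gauss γ) x


lemma gauss_hasDerivAt (γ : ℝ) (x : ℝ) :
    HasDerivAt (gauss γ) ((Real.sqrt Real.pi * γ)⁻¹ *
      (Real.exp (-(x/γ)^2) * -(2 * (x/γ) ^ 1 * γ⁻¹))) x := by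
  have h1 : HasDerivAt (fun x : ℝ => x / γ) γ⁻¹ x := by
    simpa using (hasDerivAt_id x).div_const γ
  have h2 : HasDerivAt (fun x : ℝ => (x/γ)^2) (2 * (x/γ)^1 * γ⁻¹) x := by
    simpa using h1.fun_pow 2
  have h3 := ((h2.neg).exp).const_mul ((Real.sqrt Real.pi * γ)⁻¹)
  have he : gauss γ = fun y => (Real.sqrt Real.pi * γ)⁻¹ * Real.exp (-(y/γ)^2) := rfl
  rw [he]
  simpa using h3

lemma hGauss_eq (γ : ℝ) (hγ : γ ≠ 0) (x : ℝ) :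
    hGauss γ x = -2 * (Real.sqrt Real.pi * γ)⁻¹ * (x/γ) * Real.exp (-(x/γ)^2) := by
  rw [hGauss, (gauss_hasDerivAt γ x).deriv]
  field_simp

lemma gauss_nonneg {α : ℝ} (hα : 0 < α) (x : ℝ) : 0 ≤ gauss α x := by
  have h1 : 0 < Real.sqrt Real.pi * α :=
    mul_pos (Real.sqrt_pos.mpr Real.pi_pos) hα
  exact mul_nonneg (inv_nonneg.mpr h1.le) (Real.exp_pos _).le

lemma gauss_le {α : ℝ} (hα : 0 < α) (x : ℝ) : gauss α x ≤ (Real.sqrt Real.pi * α)⁻¹ := by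
  have h1 : 0 < Real.sqrt Real.pi * α :=
    mul_pos (Real.sqrt_pos.mpr Real.pi_pos) hα
  have h2 : Real.exp (-(x/α)^2) ≤ 1 := by
    rw [Real.exp_le_one_iff]; nlinarith [sq_nonneg (x/α)]
  calc gauss α x ≤ (Real.sqrt Real.pi * α)⁻¹ * 1 := by
        exact mul_le_mul_of_nonneg_left h2 (inv_nonneg.mpr h1.le)
    _ = _ := mul_one _

lemma abs_mul_exp_le (s : ℝ) : |s| * Real.exp (-s^2) ≤ 1 := by
  have h1 := Real.add_one_le_exp (s^2)
  have h2 : Real.exp (-s^2) * Real.exp (s^2) = 1 := by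
    rw [← Real.exp_add]; simp
  nlinarith [Real.exp_pos (-s^2), abs_nonneg s, sq_abs s, sq_nonneg (|s| - 1)]

lemma hGauss_abs_le {γ : ℝ} (hγ : 0 < γ) (x : ℝ) :
    |hGauss γ x| ≤ 2 * (Real.sqrt Real.pi * γ)⁻¹ := by
  have h1 : 0 < Real.sqrt Real.pi * γ :=
    mul_pos (Real.sqrt_pos.mpr Real.pi_pos) hγ
  rw [hGauss_eq γ hγ.ne' x]
  have : |-2 * (Real.sqrt Real.pi * γ)⁻¹ * (x/γ) * Real.exp (-(x/γ)^2)|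
      = 2 * (Real.sqrt Real.pi * γ)⁻¹ * (|x/γ| * Real.exp (-(x/γ)^2)) := by
    rw [abs_mul, abs_mul, abs_mul]
    rw [abs_of_pos (Real.exp_pos _), abs_of_nonneg (inv_nonneg.mpr h1.le)]
    rw [abs_neg, abs_two]
    ring
  rw [this]
  calc 2 * (Real.sqrt Real.pi * γ)⁻¹ * (|x/γ| * Real.exp (-(x/γ)^2))
      ≤ 2 * (Real.sqrt Real.pi * γ)⁻¹ * 1 :=
        mul_le_mul_of_nonneg_left (abs_mul_exp_le _) (by positivity)
    _ = _ := mul_one _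

lemma hGauss_continuous {γ : ℝ} (hγ : 0 < γ) : Continuous (hGauss γ) := by
  have : hGauss γ = fun x => -2 * (Real.sqrt Real.pi * γ)⁻¹ * (x/γ) * Real.exp (-(x/γ)^2) :=
    funext fun x => hGauss_eq γ hγ.ne' x
  rw [this]; fun_prop

lemma hGauss_integrable {γ : ℝ} (hγ : 0 < γ) : Integrable (hGauss γ) := by
  have h1 : hGauss γ = fun x =>
      (-2 * (Real.sqrt Real.pi * γ)⁻¹ * γ⁻¹) * (x * Real.exp (-(γ⁻¹^2) * x^2)) := by
    funext x
    rw [hGauss_eq γ hγ.ne' x]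
    rw [div_pow]
    field_simp
  rw [h1]
  exact (integrable_mul_exp_neg_mul_sq (by positivity)).const_mul _

lemma gauss_continuous {α : ℝ} : Continuous (gauss α) := by
  unfold gauss; fun_prop

lemma quad_nonneg (F : ℝ × ℝ → ℝ) (g h : ℝ → ℝ) (hg : ∀ x, 0 ≤ g x) (hgB : ∃ Mg, ∀ x, g x ≤ Mg)
    (hgm : Measurable g) (hhm : Measurable h) (hhi : Integrable h)
    (hhB : ∃ Mh, ∀ x, |h x| ≤ Mh)
    (hm : Measurable F) (B : ℝ) (hB : ∀ z, |F z| ≤ B)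
    (hs : volume (Function.support F) < ⊤) :
    0 ≤ ∫ x : ℝ, ∫ y : ℝ, ∫ x' : ℝ, ∫ y' : ℝ,
      F (x, y) * F (x', y) * F (x', y') * F (x, y') *
        g x * h y * g x' * h y' := by
  obtain ⟨Mg, hMg⟩ := hgB
  obtain ⟨Mh, hMh⟩ := hhB
  have hB0 : 0 ≤ B := le_trans (abs_nonneg _) (hB (0,0))
  have hMg0 : 0 ≤ Mg := le_trans (hg 0) (hMg 0)
  have hMh0 : 0 ≤ Mh := le_trans (abs_nonneg _) (hMh 0)
  -- the kernel H
  set H : ℝ → ℝ → ℝ := fun x x' => ∫ y, F (x, y) * F (x', y) * h y with hHdef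
  set MH : ℝ := B^2 * ∫ y, |h y| with hMH
  have hMH0 : 0 ≤ MH := mul_nonneg (by positivity) (integral_nonneg fun y => abs_nonneg _)
  have hHB : ∀ x x', |H x x'| ≤ MH := by
    intro x x'
    have h1 : |H x x'| ≤ ∫ y, |F (x, y)| * |F (x', y)| * |h y| := by
      simpa [hHdef, Real.norm_eq_abs] using norm_integral_le_integral_norm
        (f := fun y => F (x, y) * F (x', y) * h y) (μ := volume)
    refine h1.trans ?_
    rw [hMH, ← integral_const_mul]
    refine integral_mono_of_nonneg (f := fun y => |F (x, y)| * |F (x', y)| * |h y|)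
      (g := fun y => B ^ 2 * |h y|)
      (Filter.Eventually.of_forall fun y => by positivity)
      (hhi.abs.const_mul _) (Filter.Eventually.of_forall fun y => ?_)
    show |F (x, y)| * |F (x', y)| * |h y| ≤ B ^ 2 * |h y|
    calc |F (x, y)| * |F (x', y)| * |h y| ≤ B * B * |h y| := by
          apply mul_le_mul_of_nonneg_right _ (abs_nonneg _)
          exact mul_le_mul (hB _) (hB _) (abs_nonneg _) hB0
      _ = B^2 * |h y| := by ring
  have hHm : ∀ x, Measurable (H x) := by
    intro x
    have : StronglyMeasurable fun z : ℝ × ℝ => F (x, z.2) * F (z.1, z.2) * h z.2 := by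
      apply Measurable.stronglyMeasurable
      exact ((hm.comp (measurable_const.prodMk measurable_snd)).mul
        (hm.comp (measurable_fst.prodMk measurable_snd))).mul (hhm.comp measurable_snd)
    exact this.integral_prod_right'.measurable
  -- step 1: simplify inner triple integral for fixed x
  have key : ∀ x, (∫ y : ℝ, ∫ x' : ℝ, ∫ y' : ℝ,
      F (x, y) * F (x', y) * F (x', y') * F (x, y') * g x * h y * g x' * h y')
      = g x * ∫ x' : ℝ, g x' * (H x x')^2 := by
    intro x
    have s1 : ∀ y x', (∫ y' : ℝ,
        F (x, y) * F (x', y) * F (x', y') * F (x, y') * g x * h y * g x' * h y')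
        = (F (x, y) * g x * h y) * (F (x', y) * g x' * H x x') := by
      intro y x'
      have : (fun y' => F (x, y) * F (x', y) * F (x', y') * F (x, y') * g x * h y * g x' * h y')
          = fun y' => (F (x, y) * F (x', y) * g x * h y * g x') * (F (x, y') * F (x', y') * h y') := by
        funext y'; ring
      rw [this, integral_const_mul, hHdef]
      ring
    have s2 : ∀ y, (∫ x' : ℝ, ∫ y' : ℝ,
        F (x, y) * F (x', y) * F (x', y') * F (x, y') * g x * h y * g x' * h y')
        = g x * ∫ x', (F (x, y) * h y) * (F (x', y) * g x' * H x x') := by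
      intro y
      rw [show (fun x' => ∫ y' : ℝ,
        F (x, y) * F (x', y) * F (x', y') * F (x, y') * g x * h y * g x' * h y')
        = fun x' => g x * ((F (x, y) * h y) * (F (x', y) * g x' * H x x')) from
          funext fun x' => by rw [s1 y x']; ring]
      rw [integral_const_mul]
    -- Fubini swap
    have hint : Integrable (Function.uncurry fun y x' =>
        (F (x, y) * h y) * (F (x', y) * g x' * H x x')) (volume.prod volume) := by
      have hmeas : AEStronglyMeasurable (Function.uncurry fun y x' =>
          (F (x, y) * h y) * (F (x', y) * g x' * H x x')) (volume.prod volume) := by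
        apply Measurable.aestronglyMeasurable
        apply Measurable.mul
        · exact (hm.comp (measurable_const.prodMk measurable_fst)).mul (hhm.comp measurable_fst)
        · exact ((hm.comp (measurable_snd.prodMk measurable_fst)).mul
            (hgm.comp measurable_snd)).mul ((hHm x).comp measurable_snd)
      set A : Set (ℝ × ℝ) := Prod.swap ⁻¹' (Function.support F) with hA
      have hAm : MeasurableSet A :=
        measurable_swap (measurableSet_support hm)
      have hAvol : volume A < ⊤ := by
        have hswap : MeasurePreserving (Prod.swap : ℝ × ℝ → ℝ × ℝ)
            (volume : Measure (ℝ × ℝ)) volume := by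
          rw [show (volume : Measure (ℝ × ℝ)) = (volume : Measure ℝ).prod volume from
            (Measure.volume_eq_prod _ _)]
          exact Measure.measurePreserving_swap
        rw [hA, hswap.measure_preimage (measurableSet_support hm).nullMeasurableSet]
        exact hs
      set M : ℝ := B * Mh * (B * Mg * MH) with hM
      have hM0 : 0 ≤ M := by positivity
      have hdom : Integrable (A.indicator fun _ => M) (volume.prod volume) := by
        rw [integrable_indicator_iff hAm]
        exact integrableOn_const hAvol.ne
      apply hdom.mono hmeas
      refine Filter.Eventually.of_forall fun z => ?_
      by_cases hz : z ∈ A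
      · rw [indicator_of_mem hz]
        simp only [Function.uncurry, Real.norm_eq_abs]
        rw [abs_of_nonneg hM0, hM]
        rw [abs_mul]
        apply mul_le_mul _ _ (abs_nonneg _) (by positivity)
        · rw [abs_mul]
          exact mul_le_mul (hB _) (hMh _) (abs_nonneg _) hB0
        · rw [abs_mul, abs_mul]
          apply mul_le_mul _ (hHB x _) (abs_nonneg _) (by positivity)
          rw [abs_of_nonneg (hg _)]
          exact mul_le_mul (hB _) (hMg _) (hg _) hB0
      · rw [indicator_of_notMem hz]
        have : F (z.2, z.1) = 0 := by
          by_contra hc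
          exact hz (by simpa [hA, Function.mem_support, Prod.swap] using hc)
        simp [Function.uncurry, this]
    have swap := integral_integral_swap hint
    -- conclude
    rw [show (fun y => ∫ x' : ℝ, ∫ y' : ℝ,
        F (x, y) * F (x', y) * F (x', y') * F (x, y') * g x * h y * g x' * h y')
        = fun y => g x * ∫ x', (F (x, y) * h y) * (F (x', y) * g x' * H x x') from
        funext fun y => s2 y]
    rw [integral_const_mul]
    congr 1
    rw [swap]
    apply integral_congr_ae
    refine Filter.Eventually.of_forall fun x' => ?_
    show (∫ y : ℝ, (F (x, y) * h y) * (F (x', y) * g x' * H x x')) = g x' * (H x x')^2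
    have : (fun y => (F (x, y) * h y) * (F (x', y) * g x' * H x x'))
        = fun y => (g x' * H x x') * (F (x, y) * F (x', y) * h y) := by
      funext y; ring
    rw [this, integral_const_mul, hHdef]
    ring
  rw [show (fun x => ∫ y : ℝ, ∫ x' : ℝ, ∫ y' : ℝ,
      F (x, y) * F (x', y) * F (x', y') * F (x, y') * g x * h y * g x' * h y')
      = fun x => g x * ∫ x' : ℝ, g x' * (H x x')^2 from funext key]
  apply integral_nonneg
  intro x
  apply mul_nonneg (hg x)
  exact integral_nonneg fun x' => mul_nonneg (hg x') (sq_nonneg _)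


lemma entConv_nonneg (α γ : ℝ) (hα : 0 < α) (hγ : 0 < γ)
    (F : ℝ × ℝ → ℝ) (hm : Measurable F) (B : ℝ) (hB : ∀ z, |F z| ≤ B)
    (hs : volume (Function.support F) < ⊤) (t p q : ℝ) (ht : 0 < t) :
    0 ≤ entConv F F F F (gauss α) (hGauss γ) (gauss α) (hGauss γ) t p q := by
  have hc1 : 0 < Real.sqrt Real.pi * α := mul_pos (Real.sqrt_pos.mpr Real.pi_pos) hα
  have ht' : 0 ≤ t⁻¹ := inv_nonneg.mpr ht.le
  have := quad_nonneg F (fun x => t⁻¹ * gauss α ((p - x)/t))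
    (fun y => t⁻¹ * hGauss γ ((q - y)/t))
    (fun x => mul_nonneg ht' (gauss_nonneg hα _))
    ⟨t⁻¹ * (Real.sqrt Real.pi * α)⁻¹,
      fun x => mul_le_mul_of_nonneg_left (gauss_le hα _) ht'⟩
    ((continuous_const.mul (gauss_continuous.comp (by fun_prop))).measurable)
    (by
      have : Continuous fun y => t⁻¹ * hGauss γ ((q - y)/t) := by
        exact (continuous_const.mul ((hGauss_continuous hγ).comp (by fun_prop)))
      exact this.measurable)
    (by
      have h1 : Integrable (fun s => hGauss γ (s / t)) :=
        (hGauss_integrable hγ).comp_div ht.ne'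
      exact (h1.comp_sub_left q).const_mul t⁻¹)
    ⟨t⁻¹ * (2 * (Real.sqrt Real.pi * γ)⁻¹), fun y => by
      rw [abs_mul, abs_of_nonneg ht']
      exact mul_le_mul_of_nonneg_left (hGauss_abs_le hγ _) ht'⟩
    hm B hB hs
  exact this

theorem Theta_gauss_nonneg' (α γ : ℝ) (hα : 0 < α) (hγ : 0 < γ)
    (C : Finset (ℤ × ℤ × ℤ)) (F : ℝ × ℝ → ℝ) (hm : Measurable F)
    (hb : ∃ B : ℝ, ∀ z, |F z| ≤ B) (hs : volume (Function.support F) < ⊤) :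
    0 ≤ Theta (C : Set (ℤ × ℤ × ℤ)) (gauss α) (hGauss γ) (gauss α) (hGauss γ) F F F F := by
  obtain ⟨B, hB⟩ := hb
  have hOm : MeasurableSet (Omega (C : Set (ℤ × ℤ × ℤ))) := by
    apply Set.Finite.measurableSet_biUnion C.finite_toSet
    intro a _
    exact ((measurableSet_Icc.prod measurableSet_Icc).prod measurableSet_Icc)
  apply setIntegral_nonneg hOm
  intro w hw
  rw [Omega, Set.mem_iUnion₂] at hw
  obtain ⟨a, ha, hwa⟩ := hw
  have ht : 0 < w.2 := by
    have h2 : (0:ℝ) < (2:ℝ)^a.1 / 2 := by positivity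
    exact lt_of_lt_of_le h2 hwa.2.1
  exact div_nonneg (entConv_nonneg α γ hα hγ F hm B hB hs w.2 w.1.1 w.1.2 ht) ht.le

/-- Positivity of `Θ^𝒞_{g_α, h_γ}(F,F,F,F)`. -/
theorem Theta_gauss_nonneg (α γ : ℝ) (hα : 0 < α) (hγ : 0 < γ)
    (C : Finset (ℤ × ℤ × ℤ)) (F : ℝ × ℝ → ℝ) (hm : Measurable F)
    (hb : ∃ B : ℝ, ∀ z, |F z| ≤ B) (hs : volume (Function.support F) < ⊤) :
    0 ≤ Theta (C : Set (ℤ × ℤ × ℤ)) (gauss α) (hGauss γ) (gauss α) (hGauss γ) F F F F := by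
  exact Theta_gauss_nonneg' α γ hα hγ C F hm hb hs

end
end
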